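/- arXiv:1711.04958 — 10 statements merged into one kernel-verified Lean document; each statement's English description precedes it below -/
import Mathlib

section
/- Let φ : R → S be a flat ring homomorphism of commutative rings with S Noetherian, let M be an R-module, and let p be an associated prime of M over R. Then either the extension of p to S is all of S (i.e. pS = S), or there exists an associated prime q of the S-module M ⊗_R S such that φ⁻¹(q) = p. -/
open TensorProduct

/-- Let `φ : R → S` be a flat ring homomorphism (here given by an algebra structure with
flat structure map) with `S` Noetherian, `M` an `R`-module, and `p ∈ Ass_R(M)`. Then either
`pS = S` or there exists `q ∈ Ass_S(M ⊗_R S)` contracting to `p`. -/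
theorem stmt0 {R S : Type*} [CommRing R] [CommRing S] [Nontrivial R] [Nontrivial S]
    [Algebra R S] [Module.Flat R S] [IsNoetherianRing S]
    (M : Type*) [AddCommGroup M] [Module R M]
    (p : Ideal R) (hp : p ∈ associatedPrimes R M) :
    p.map (algebraMap R S) = ⊤ ∨
      ∃ q ∈ associatedPrimes S (S ⊗[R] M), q.comap (algebraMap R S) = p := by
  by_cases htop : p.map (algebraMap R S) = ⊤
  · exact Or.inl htop
  right
  obtain ⟨hpprime, x, hx⟩ := hp
  set I : Ideal R := (⊥ : Submodule R M).colon {x} with hI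
  -- the injective map R⧸I →ₗ[R] M
  have hker : I ≤ LinearMap.ker (LinearMap.toSpanSingleton R M x) := by
    intro r hr
    rw [hI, Submodule.mem_colon_singleton] at hr
    simpa [LinearMap.mem_ker] using hr
  set f : (R ⧸ I) →ₗ[R] M := Submodule.liftQ I (LinearMap.toSpanSingleton R M x) hker with hf
  have hfinj : Function.Injective f := by
    rw [← LinearMap.ker_eq_bot, hf]
    apply Submodule.ker_liftQ_eq_bot
    intro r hr
    rw [LinearMap.mem_ker] at hr
    rw [hI, Submodule.mem_colon_singleton]
    simpa using hr
  -- base change to S is injective by flatness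
  set F : (S ⊗[R] (R ⧸ I)) →ₗ[S] S ⊗[R] M := f.baseChange S with hF
  have hFinj : Function.Injective F := by
    have : Function.Injective (f.lTensor S) :=
      Module.Flat.lTensor_preserves_injective_linearMap f hfinj
    exact this
  -- a minimal prime Q over pS
  obtain ⟨m, hm, hpm⟩ := Ideal.exists_le_maximal _ htop
  obtain ⟨Q, hQ, -⟩ := Ideal.exists_minimalPrimes_le (J := m) hpm
  have hQprime : Q.IsPrime := hQ.1.1
  have hQcomap : Q.comap (algebraMap R S) = p := by
    have hle : p ≤ Q.comap (algebraMap R S) := Ideal.map_le_iff_le_comap.mp hQ.1.2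
    by_contra hneq
    have hlt : p < Q.comap (algebraMap R S) := lt_of_le_of_ne hle (Ne.symm hneq)
    haveI : (Q.comap (algebraMap R S)).IsPrime := Ideal.comap_isPrime _ Q
    haveI : Q.LiesOver (Q.comap (algebraMap R S)) := ⟨rfl⟩
    obtain ⟨P, hPQ, hP, hPl⟩ := Ideal.exists_ideal_lt_liesOver_of_lt (p := p) Q hlt
    have hPmap : p.map (algebraMap R S) ≤ P := by
      rw [Ideal.map_le_iff_le_comap]
      exact le_of_eq hPl.over
    exact lt_irrefl P (lt_of_lt_of_le hPQ (hQ.2 ⟨hP, hPmap⟩ hPQ.le))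
  have hQI : Q ∈ (I.map (algebraMap R S)).minimalPrimes := by
    refine ⟨⟨hQprime, le_trans (Ideal.map_mono ?_) hQ.1.2⟩, ?_⟩
    · rw [hx]; exact Ideal.le_radical
    · rintro P ⟨hP, hIP⟩ hPQ
      apply hQ.2 ⟨hP, ?_⟩ hPQ
      rw [Ideal.map_le_iff_le_comap]
      intro r hr
      rw [hx] at hr
      obtain ⟨n, hn⟩ := hr
      have : algebraMap R S (r ^ n) ∈ P := hIP (Ideal.mem_map_of_mem _ hn)
      rw [map_pow] at this
      exact hP.mem_of_pow_mem n this
  have hass : Q ∈ associatedPrimes S (S ⧸ I.map (algebraMap R S)) := by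
    apply Module.associatedPrimes.minimalPrimes_annihilator_subset_associatedPrimes
    rw [Ideal.annihilator_quotient]
    exact hQI
  refine ⟨Q, associatedPrimes.subset_of_injective hFinj ?_, hQcomap⟩
  rw [← LinearEquiv.AssociatedPrimes.eq
    (Algebra.TensorProduct.quotIdealMapEquivTensorQuot S I).toLinearEquiv]
  exact hass
end

section
/- Let φ : R → S be a flat ring homomorphism of nontrivial commutative rings. Then every prime ideal of R that is minimal over ker φ is a minimal prime of R (i.e. the minimal primes of the ideal ker φ have codimension 0). -/
open TensorProduct in
/-- Over a faithfully flat algebra the structure map is injective. -/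
lemma ff_algebraMap_injective {A T : Type*} [CommRing A] [CommRing T] [Algebra A T]
    [Module.FaithfullyFlat A T] : Function.Injective (algebraMap A T) := by
  refine (injective_iff_map_eq_zero _).mpr fun a ha => ?_
  by_contra hne
  set t : A →ₗ[A] A := LinearMap.toSpanSingleton A A a with ht
  set I : Ideal A := LinearMap.ker t with hI
  have hIproper : I ≠ ⊤ := by
    intro h
    have : (1 : A) ∈ I := h ▸ trivial
    simp only [hI, LinearMap.mem_ker, ht, LinearMap.toSpanSingleton_apply, one_smul] at this
    exact hne this
  let e := t.quotKerEquivRange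
  let f : (A ⧸ I) →ₗ[A] A := (LinearMap.range t).subtype ∘ₗ e.toLinearMap
  have hf : Function.Injective f := Subtype.val_injective.comp e.injective
  have hinj : Function.Injective (f.rTensor T) :=
    Module.Flat.rTensor_preserves_injective_linearMap f hf
  have hfa : f (Ideal.Quotient.mk I (1 : A)) = a := by
    show ((t.quotKerEquivRange (Submodule.Quotient.mk 1)) : A) = a
    rw [LinearMap.quotKerEquivRange_apply_mk]
    simp [ht]
  have hx : (f.rTensor T) ((Ideal.Quotient.mk I (1 : A)) ⊗ₜ[A] (1 : T)) = a ⊗ₜ[A] (1 : T) := by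
    rw [LinearMap.rTensor_tmul, hfa]
  have hzero : a ⊗ₜ[A] (1 : T) = (0 : A ⊗[A] T) := by
    apply (TensorProduct.lid A T).injective
    simpa [Algebra.algebraMap_eq_smul_one] using ha
  have hx0 : ((Ideal.Quotient.mk I (1 : A)) ⊗ₜ[A] (1 : T) : (A ⧸ I) ⊗[A] T) = 0 := by
    apply hinj
    rw [hx, hzero, map_zero]
  have h1 : (1 : T) ∈ (I • (⊤ : Submodule A T)) := by
    have h2 : TensorProduct.quotTensorEquivQuotSMul T I
        ((Ideal.Quotient.mk I (1 : A)) ⊗ₜ[A] (1 : T)) = Submodule.Quotient.mk ((1:A) • (1:T)) :=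
      TensorProduct.quotTensorEquivQuotSMul_mk_tmul I 1 1
    rw [hx0, map_zero] at h2
    have := (Submodule.Quotient.mk_eq_zero _).mp h2.symm
    simpa using this
  have hmul : ∀ y ∈ (I • (⊤ : Submodule A T)), ∀ s : T, s * y ∈ (I • (⊤ : Submodule A T)) := by
    intro y hy
    refine Submodule.smul_induction_on hy ?_ ?_
    · intro r hr n _ s
      rw [Algebra.mul_smul_comm]
      exact Submodule.smul_mem_smul hr trivial
    · intro x y hx hy s
      rw [mul_add]
      exact Submodule.add_mem _ (hx s) (hy s)
  have htop : I • (⊤ : Submodule A T) = ⊤ := by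
    rw [Submodule.eq_top_iff']
    intro s
    simpa using hmul 1 h1 s
  exact ((Module.FaithfullyFlat.iff_flat_and_proper_ideal A T).mp inferInstance).2 I hIproper htop

/-- If `φ : R → S` is a flat ring homomorphism of nontrivial commutative rings, then every
prime of `R` minimal over `ker φ` is a minimal prime of `R`. -/
theorem stmt3 {R S : Type*} [CommRing R] [CommRing S] [Nontrivial R] [Nontrivial S]
    (φ : R →+* S) (hφ : φ.Flat) (p : Ideal R) (hp : p ∈ (RingHom.ker φ).minimalPrimes) :
    p ∈ minimalPrimes R := by
  classical
  haveI hpp : p.IsPrime := hp.1.1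
  have hker : RingHom.ker φ = Ideal.comap φ ⊥ := by
    ext x; simp [RingHom.mem_ker]
  obtain ⟨q, hq, -, hqp⟩ := Ideal.exists_comap_eq_of_mem_minimalPrimes φ p (hker ▸ hp)
  haveI := hq
  letI : Algebra R S := φ.toAlgebra
  haveI : Module.Flat R S := hφ
  set T := Localization.AtPrime q with hT
  haveI : Module.Flat R T := Module.Flat.trans R S T
  set A := Localization.AtPrime p with hA
  have hu : ∀ s : p.primeCompl, IsUnit ((algebraMap R T) s) := by
    intro s
    have hs : φ s ∈ q.primeCompl := by
      intro h
      have h2 : (s : R) ∈ Ideal.comap φ q := Ideal.mem_comap.mpr h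
      rw [hqp] at h2
      exact s.2 h2
    have := IsLocalization.map_units T (⟨φ s, hs⟩ : q.primeCompl)
    rwa [IsScalarTower.algebraMap_apply R S T]
  letI : Algebra A T := (IsLocalization.lift hu).toAlgebra
  haveI : IsScalarTower R A T :=
    IsScalarTower.of_algebraMap_eq'
      (show algebraMap R T = (algebraMap A T).comp (algebraMap R A) from
        (IsLocalization.lift_comp hu).symm)
  haveI : IsLocalizedModule p.primeCompl (LinearMap.id : T →ₗ[R] T) :=
    isLocalizedModule_id p.primeCompl T A
  haveI : Module.Flat A T :=
    Module.Flat.of_isLocalizedModule (Rp := A) p.primeCompl (LinearMap.id : T →ₗ[R] T)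
  have key : ∀ a ∈ IsLocalRing.maximalIdeal A, algebraMap A T a ∈ IsLocalRing.maximalIdeal T := by
    intro a ha
    obtain ⟨⟨x, s⟩, rfl⟩ := IsLocalization.mk'_surjective p.primeCompl a
    have hx : x ∈ p := by
      by_contra hxp
      exact (IsLocalRing.mem_maximalIdeal _).mp ha
        ((IsLocalization.AtPrime.isUnit_mk'_iff A p x s).mpr hxp)
    have heq : algebraMap A T (IsLocalization.mk' A x s) * algebraMap R T s = algebraMap R T x := by
      have hspec := IsLocalization.mk'_spec A x s
      calc algebraMap A T (IsLocalization.mk' A x s) * algebraMap R T s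
          = algebraMap A T (IsLocalization.mk' A x s * algebraMap R A s) := by
            rw [map_mul, ← IsScalarTower.algebraMap_apply R A T]
        _ = algebraMap A T (algebraMap R A x) := by rw [hspec]
        _ = algebraMap R T x := (IsScalarTower.algebraMap_apply R A T x).symm
    have hxT : algebraMap R T x ∈ IsLocalRing.maximalIdeal T := by
      have hxq : φ x ∈ q := by
        have : x ∈ Ideal.comap φ q := hqp ▸ hx
        exact this
      rw [IsScalarTower.algebraMap_apply R S T]
      exact (IsLocalization.AtPrime.to_map_mem_maximal_iff T q _).mpr hxq
    haveI : (IsLocalRing.maximalIdeal T).IsPrime := Ideal.IsMaximal.isPrime inferInstance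
    rcases (this.mem_or_mem (heq ▸ hxT)) with h | h
    · exact h
    · exact absurd ((IsLocalRing.mem_maximalIdeal _).mp h) (not_not.mpr (hu s))
  haveI hff : Module.FaithfullyFlat A T := by
    refine ⟨fun m hm => ?_⟩
    rw [IsLocalRing.eq_maximalIdeal hm]
    intro htop
    have hle : IsLocalRing.maximalIdeal A • (⊤ : Submodule A T) ≤
        (IsLocalRing.maximalIdeal T).restrictScalars A := by
      refine Submodule.smul_le.2 fun a ha t _ => ?_
      have heq : a • t = algebraMap A T a * t := Algebra.smul_def a t
      rw [Submodule.restrictScalars_mem, heq]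
      exact Ideal.mul_mem_right t _ (key a ha)
    have h1 : (1 : T) ∈ IsLocalRing.maximalIdeal A • (⊤ : Submodule A T) := by
      rw [htop]; trivial
    exact (Ideal.ne_top_iff_one _).mp (IsLocalRing.maximalIdeal.isMaximal T).ne_top (hle h1)
  refine ⟨⟨hpp, bot_le⟩, ?_⟩
  rintro p' ⟨hp'prime, -⟩ hp'le
  haveI := hp'prime
  have h0 : (0 : T) ∉ (p'.primeCompl.map (algebraMap R T) : Set T) := by
    rintro ⟨r, hr, hr0⟩
    have habs : algebraMap A T (algebraMap R A r) = algebraMap A T 0 := by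
      rw [← IsScalarTower.algebraMap_apply, map_zero]
      exact hr0
    have hrA : algebraMap R A r = 0 := ff_algebraMap_injective habs
    obtain ⟨m, hm⟩ := (IsLocalization.map_eq_zero_iff p.primeCompl A r).mp hrA
    have hmem : (m : R) * r ∈ p' := hm ▸ p'.zero_mem
    rcases hp'prime.mem_or_mem hmem with h | h
    · exact m.2 (hp'le h)
    · exact hr h
  have hdisj : Disjoint ((⊥ : Ideal T) : Set T)
      (p'.primeCompl.map (algebraMap R T) : Set T) := by
    rw [Set.disjoint_left]
    intro x hx
    have : x = 0 := by simpa using hx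
    rw [this]
    exact h0
  obtain ⟨Q, hQ, -, hQdisj⟩ := Ideal.exists_le_prime_disjoint (⊥ : Ideal T) _ hdisj
  haveI := hQ
  set p'' := Q.comap (algebraMap R T : R →+* T) with hp''
  have hker'' : RingHom.ker φ ≤ p'' := by
    intro x hx
    have hx0 : algebraMap R T x = 0 := by
      rw [IsScalarTower.algebraMap_apply R S T]
      show algebraMap S T (φ x) = 0
      rw [RingHom.mem_ker.mp hx, map_zero]
    show algebraMap R T x ∈ Q
    rw [hx0]; exact Q.zero_mem
  have hle'' : p'' ≤ p' := by
    intro r hr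
    by_contra hrp'
    exact Set.disjoint_left.mp hQdisj hr ⟨r, hrp', rfl⟩
  have hfinal : p ≤ p'' := hp.2 ⟨Ideal.IsPrime.comap _, hker''⟩ (hle''.trans hp'le)
  exact hfinal.trans hle''
end

section
/- Let R be a nontrivial commutative ring. The following are equivalent: (1) for every nontrivial commutative ring S, every flat ring homomorphism R → S is injective; (2) every zerodivisor of R is nilpotent (i.e. the zero ideal of R is primary); (3) R has a unique minimal prime p, and the set of zerodivisors of R equals p. -/
universe u

/-- Nilpotent elements are zerodivisors (in a nontrivial ring). -/
lemma aux_nilpotent_zd {R : Type u} [CommRing R] [Nontrivial R] {r : R}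
    (h : IsNilpotent r) : ∃ s : R, s ≠ 0 ∧ r * s = 0 := by
  obtain ⟨k, hk⟩ := h
  have hP : ∃ n, r ^ n = 0 := ⟨k, hk⟩
  classical
  set n := Nat.find hP with hn
  have hn0 : n ≠ 0 := by
    intro h0
    have := Nat.find_spec hP
    rw [← hn, h0, pow_zero] at this
    exact one_ne_zero this
  refine ⟨r ^ (n - 1), ?_, ?_⟩
  · exact Nat.find_min hP (Nat.sub_lt (Nat.pos_of_ne_zero hn0) one_pos)
  · have : r * r ^ (n - 1) = r ^ n := by
      rw [← pow_succ']
      congr 1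
      omega
    rw [this]
    exact Nat.find_spec hP

/-- For a nontrivial commutative ring `R`, TFAE: (1) every flat ring map out of `R` to a
nontrivial ring is injective; (2) every zerodivisor of `R` is nilpotent; (3) `R` has a unique
minimal prime `p` and the zerodivisors of `R` are exactly the elements of `p`. -/
theorem stmt4 {R : Type u} [CommRing R] [Nontrivial R] :
    List.TFAE
      [∀ (S : Type u) [CommRing S], Nontrivial S →
          ∀ φ : R →+* S, φ.Flat → Function.Injective φ,
        ∀ r : R, (∃ s : R, s ≠ 0 ∧ r * s = 0) → IsNilpotent r,
        ∃ p : Ideal R, minimalPrimes R = {p} ∧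
          ∀ r : R, (∃ s : R, s ≠ 0 ∧ r * s = 0) ↔ r ∈ p] := by
  tfae_have 1 → 2 := by
    rintro h1 r ⟨s, hs, hrs⟩
    by_contra hnil
    set S := Localization.Away r with hS
    have hnt : Nontrivial S := by
      by_contra h
      rw [not_nontrivial_iff_subsingleton] at h
      have h10 : algebraMap R S 1 = 0 := Subsingleton.elim _ _
      obtain ⟨m, hm⟩ := (IsLocalization.map_eq_zero_iff (Submonoid.powers r) S 1).mp h10
      obtain ⟨n, hn⟩ := m.2
      exact hnil ⟨n, by rw [show r ^ n = (m : R) from hn]; simpa using hm⟩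
    have halg : (algebraMap R S).toAlgebra = (inferInstance : Algebra R S) :=
      Algebra.algebra_ext _ _ fun x => by rw [RingHom.algebraMap_toAlgebra]
    have hflat : (algebraMap R S).Flat := by
      rw [RingHom.flat_algebraMap_iff]
      exact IsLocalization.flat S (Submonoid.powers r)
    have hinj := h1 S hnt (algebraMap R S) hflat
    have hs0 : algebraMap R S s = 0 := by
      rw [IsLocalization.map_eq_zero_iff (Submonoid.powers r) S]
      exact ⟨⟨r, 1, pow_one r⟩, by rw [← hrs]⟩
    exact hs (hinj (by rw [hs0, map_zero]))
  tfae_have 2 → 1 := by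
    intro h2 S _ hS φ hφ
    letI := φ.toAlgebra
    haveI : Module.Flat R S := hφ
    rw [injective_iff_map_eq_zero]
    intro r hr
    by_contra hr0
    -- relation r • 1 = 0 in S
    have hrel : ∑ _i : PUnit.{u + 1}, (fun _ => r) _i • (fun _ => (1 : S)) _i = 0 := by
      simp [Algebra.smul_def, RingHom.algebraMap_toAlgebra, hr]
    obtain ⟨κ, a, y, hx, ha⟩ := Module.Flat.isTrivialRelation_of_sum_smul_eq_zero (R := R) (M := S) (f := fun _ : PUnit.{u + 1} => r) (x := fun _ => (1 : S)) hrel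
    have h1nil : IsNilpotent (1 : S) := by
      rw [← mem_nilradical]
      have h1 : (1 : S) = ∑ j, a PUnit.unit j • y j := hx PUnit.unit
      rw [h1]
      refine Ideal.sum_mem _ fun j _ => ?_
      have haj : r * a PUnit.unit j = 0 := by simpa using ha j
      have : IsNilpotent (a PUnit.unit j) :=
        h2 _ ⟨r, hr0, by rw [mul_comm]; exact haj⟩
      rw [Algebra.smul_def, RingHom.algebraMap_toAlgebra]
      exact Ideal.mul_mem_right _ _ (mem_nilradical.mpr (this.map φ))
    obtain ⟨n, hn⟩ := h1nil
    simp at hn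
  tfae_have 2 → 3 := by
    intro h2
    have hprime : (nilradical R).IsPrime := by
      constructor
      · intro h
        have : IsNilpotent (1 : R) := by
          rw [← mem_nilradical]; rw [h]; trivial
        obtain ⟨n, hn⟩ := this
        simp at hn
      · intro a b hab
        rw [mem_nilradical] at hab
        by_cases hA : IsNilpotent a
        · exact Or.inl (mem_nilradical.mpr hA)
        · right
          rw [mem_nilradical]
          obtain ⟨n, hn⟩ := hab
          have hanbn : a ^ n * b ^ n = 0 := by rw [← mul_pow, hn]
          have hab' : IsNilpotent (b ^ n) := by
            refine h2 _ ⟨a ^ n, ?_, by rw [mul_comm]; exact hanbn⟩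
            intro h
            exact hA (by
              obtain ⟨m, hm⟩ : IsNilpotent (a ^ n) := ⟨1, by rw [pow_one, h]⟩
              exact ⟨n * m, by rw [pow_mul, hm]⟩)
          obtain ⟨m, hm⟩ := hab'
          exact ⟨n * m, by rw [pow_mul, hm]⟩
    refine ⟨nilradical R, ?_, fun r => ⟨fun h => mem_nilradical.mpr (h2 r h),
      fun h => aux_nilpotent_zd (mem_nilradical.mp h)⟩⟩
    rw [minimalPrimes_eq_minimals]
    ext q
    constructor
    · rintro ⟨hq, hmin⟩
      exact le_antisymm (hmin hprime (nilradical_le_prime q)) (nilradical_le_prime q)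
        |>.symm ▸ rfl
    · rintro rfl
      exact ⟨hprime, fun y hy hle => nilradical_le_prime y⟩
  tfae_have 3 → 2 := by
    rintro ⟨p, hmin, hzd⟩ r hr
    rw [← mem_nilradical, nilradical_eq_sInf, Submodule.mem_sInf]
    intro q hq
    haveI : Ideal.IsPrime q := hq
    obtain ⟨q', hq', hle⟩ := Ideal.exists_minimalPrimes_le (bot_le : (⊥ : Ideal R) ≤ q)
    have : q' = p := by
      have : q' ∈ minimalPrimes R := hq'
      rwa [hmin, Set.mem_singleton_iff] at this
    exact hle (this ▸ (hzd r).mp hr)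
  tfae_finish
end

section
/- Let R be a nontrivial commutative ring. The following are equivalent: (1) there exist a nontrivial Noetherian commutative ring S and a flat ring homomorphism R → S; (2) there exists a prime ideal p of R such that the localization R_p is Noetherian; (3) there exists a minimal prime p of R such that the localization R_p is Artinian. -/
universe u

section Descent

variable {R S M : Type*} [CommRing R] [CommRing S] [Algebra R S]
  [AddCommGroup M] [Module R M] [Module S M] [IsScalarTower R S M]

private lemma span_restrict_aux (h : Function.Surjective (algebraMap R S))
    (N : Submodule R M) : (Submodule.span S (N : Set M)).restrictScalars R = N := by
  rw [Submodule.restrictScalars_span R S h, Submodule.span_eq]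

private lemma strictMono_span_aux (h : Function.Surjective (algebraMap R S)) :
    StrictMono (fun N : Submodule R M => Submodule.span S (N : Set M)) := by
  intro N N' hlt
  refine lt_of_le_of_ne (Submodule.span_mono hlt.le) fun hEq => hlt.ne ?_
  have h2 := congrArg (Submodule.restrictScalars R) hEq
  rwa [span_restrict_aux h N, span_restrict_aux h N'] at h2

private lemma isNoetherian_of_surj_algebraMap (h : Function.Surjective (algebraMap R S))
    (hM : IsNoetherian S M) : IsNoetherian R M := by
  rw [isNoetherian_iff] at hM ⊢
  exact (RelHomClass.wellFounded
    (⟨fun N : Submodule R M => Submodule.span S (N : Set M),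
      fun {a b} hab => strictMono_span_aux h hab⟩ :
      ((· > ·) : Submodule R M → _ → Prop) →r ((· > ·) : Submodule S M → _ → Prop)) hM)

private lemma isArtinian_of_surj_algebraMap (h : Function.Surjective (algebraMap R S))
    (hM : IsArtinian S M) : IsArtinian R M := by
  rw [isArtinian_iff] at hM ⊢
  exact (RelHomClass.wellFounded
    (⟨fun N : Submodule R M => Submodule.span S (N : Set M),
      fun {a b} hab => strictMono_span_aux h hab⟩ :
      ((· < ·) : Submodule R M → _ → Prop) →r ((· < ·) : Submodule S M → _ → Prop)) hM)

end Descent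

section VS

private lemma isNoetherian_of_isArtinian_divisionRing {K V : Type*} [DivisionRing K]
    [AddCommGroup V] [Module K V] (h : IsArtinian K V) : IsNoetherian K V := by
  have hli : LinearIndependent K ((↑) : Module.Basis.ofVectorSpaceIndex K V → V) := by
    have := (Module.Basis.ofVectorSpace K V).linearIndependent
    rwa [Module.Basis.coe_ofVectorSpace] at this
  have hfin : (Module.Basis.ofVectorSpaceIndex K V).Finite :=
    IsArtinian.finite_of_linearIndependent hli
  haveI := hfin.to_subtype
  haveI : Module.Finite K V := Module.Finite.of_basis (Module.Basis.ofVectorSpace K V)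
  infer_instance

end VS

section Hopkins

variable {A : Type*} [CommRing A] {m : Ideal A}

private lemma torsion_aux (k : ℕ) :
    Module.IsTorsionBySet A
      (Submodule.map (m ^ (k + 1) : Ideal A).mkQ (m ^ k : Ideal A)) (m : Set A) := by
  rintro ⟨x, hx⟩ ⟨a, ha⟩
  obtain ⟨y, hy, rfl⟩ := Submodule.mem_map.mp hx
  ext
  show a • (m ^ (k + 1) : Ideal A).mkQ y = 0
  rw [← map_smul, Submodule.mkQ_apply, Submodule.Quotient.mk_eq_zero, smul_eq_mul]
  rw [pow_succ]
  exact mul_comm a y ▸ Ideal.mul_mem_mul hy ha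

private lemma isArtinianRing_of_pow_eq_bot [IsNoetherianRing A] (hm : m.IsMaximal)
    {n : ℕ} (hn : m ^ n = ⊥) : IsArtinianRing A := by
  have key : ∀ k : ℕ, IsArtinian A (A ⧸ (m ^ k : Ideal A)) := by
    intro k
    induction k with
    | zero =>
      rw [pow_zero, Ideal.one_eq_top]
      haveI : Subsingleton (A ⧸ (⊤ : Ideal A)) :=
        Submodule.Quotient.subsingleton_iff.mpr rfl
      infer_instance
    | succ k ih =>
      set Sk : Submodule A (A ⧸ (m ^ (k + 1) : Ideal A)) :=
        Submodule.map (m ^ (k + 1) : Ideal A).mkQ (m ^ k : Ideal A) with hSk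
      refine (isArtinian_iff_submodule_quotient Sk).mpr ⟨?_, ?_⟩
      · have htor := torsion_aux (m := m) k
        letI := htor.module
        haveI : IsScalarTower A (A ⧸ m) Sk := htor.isScalarTower
        haveI : Module.Finite A Sk := inferInstance
        letI : Field (A ⧸ m) := @Ideal.Quotient.field A _ m hm
        haveI : Module.Finite (A ⧸ m) Sk :=
          Module.Finite.of_restrictScalars_finite A (A ⧸ m) Sk
        haveI : IsArtinian (A ⧸ m) Sk := isArtinian_of_fg_of_artinian'
        exact isArtinian_of_surj_algebraMap Ideal.Quotient.mk_surjective this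
      · haveI := ih
        exact isArtinian_of_linearEquiv
          (Submodule.quotientQuotientEquivQuotient (m ^ (k + 1) : Ideal A) (m ^ k : Ideal A)
            (Ideal.pow_le_pow_right (Nat.le_succ k))).symm
  haveI := key n
  rw [isArtinianRing_iff]
  exact isArtinian_of_linearEquiv (Submodule.quotEquivOfEqBot (m ^ n : Ideal A) hn)

private lemma isNoetherianRing_of_pow_eq_bot [IsArtinianRing A] (hm : m.IsMaximal)
    {n : ℕ} (hn : m ^ n = ⊥) : IsNoetherianRing A := by
  have key : ∀ k : ℕ, IsNoetherian A (A ⧸ (m ^ k : Ideal A)) := by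
    intro k
    induction k with
    | zero =>
      rw [pow_zero, Ideal.one_eq_top]
      haveI : Subsingleton (A ⧸ (⊤ : Ideal A)) :=
        Submodule.Quotient.subsingleton_iff.mpr rfl
      infer_instance
    | succ k ih =>
      set Sk : Submodule A (A ⧸ (m ^ (k + 1) : Ideal A)) :=
        Submodule.map (m ^ (k + 1) : Ideal A).mkQ (m ^ k : Ideal A) with hSk
      refine (isNoetherian_iff_submodule_quotient Sk).mpr ⟨?_, ?_⟩
      · have htor := torsion_aux (m := m) k
        letI := htor.module
        haveI : IsScalarTower A (A ⧸ m) Sk := htor.isScalarTower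
        haveI : IsArtinian A Sk := inferInstance
        haveI : IsArtinian (A ⧸ m) Sk := isArtinian_of_tower A inferInstance
        letI : Field (A ⧸ m) := @Ideal.Quotient.field A _ m hm
        haveI : IsNoetherian (A ⧸ m) Sk := isNoetherian_of_isArtinian_divisionRing inferInstance
        exact isNoetherian_of_surj_algebraMap Ideal.Quotient.mk_surjective this
      · haveI := ih
        exact isNoetherian_of_linearEquiv
          (Submodule.quotientQuotientEquivQuotient (m ^ (k + 1) : Ideal A) (m ^ k : Ideal A)
            (Ideal.pow_le_pow_right (Nat.le_succ k))).symm
  haveI := key n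
  rw [isNoetherianRing_iff]
  exact isNoetherian_of_linearEquiv (Submodule.quotEquivOfEqBot (m ^ n : Ideal A) hn)

end Hopkins

section FF

open TensorProduct

variable {A B : Type*} [CommRing A] [CommRing B] [Algebra A B]

private lemma comap_map_eq_self_of_ff [Module.FaithfullyFlat A B] (I : Ideal A) :
    (I.map (algebraMap A B)).comap (algebraMap A B) = I := by
  refine le_antisymm ?_ Ideal.le_comap_map
  set J := (I.map (algebraMap A B)).comap (algebraMap A B) with hJ
  set K : Submodule A (A ⧸ I) := Submodule.map I.mkQ (J : Submodule A A) with hK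
  have hinj : Function.Injective (LinearMap.lTensor B K.subtype) :=
    Module.Flat.lTensor_preserves_injective_linearMap _ K.injective_subtype
  have hzero : ∀ x : B ⊗[A] K, LinearMap.lTensor B K.subtype x = 0 := by
    intro x
    induction x using TensorProduct.induction_on with
    | zero => simp
    | add a b ha hb => rw [map_add, ha, hb, add_zero]
    | tmul b k =>
      obtain ⟨k, hk⟩ := k
      obtain ⟨a, haJ, rfl⟩ := Submodule.mem_map.mp hk
      apply (TensorProduct.tensorQuotEquivQuotSMul B I).injective
      rw [map_zero]
      show tensorQuotEquivQuotSMul B I (b ⊗ₜ[A] (I.mkQ a)) = 0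
      have : I.mkQ a = Ideal.Quotient.mk I a := rfl
      rw [this, tensorQuotEquivQuotSMul_tmul_mk, Submodule.Quotient.mk_eq_zero,
        Ideal.smul_top_eq_map, Submodule.restrictScalars_mem, Algebra.smul_def]
      exact Ideal.mul_mem_right b _ haJ
  haveI : Subsingleton (B ⊗[A] K) := ⟨fun x y => hinj (by rw [hzero x, hzero y])⟩
  haveI : Subsingleton K := Module.FaithfullyFlat.lTensor_reflects_triviality A B K
  intro x hx
  have hmem : I.mkQ x ∈ K := Submodule.mem_map_of_mem hx
  have : (⟨I.mkQ x, hmem⟩ : K) = ⟨0, K.zero_mem⟩ := Subsingleton.elim _ _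
  have h0 : I.mkQ x = 0 := congrArg Subtype.val this
  rwa [Submodule.mkQ_apply, Submodule.Quotient.mk_eq_zero] at h0

private lemma isNoetherianRing_of_ff [Module.FaithfullyFlat A B]
    (hB : IsNoetherianRing B) : IsNoetherianRing A := by
  rw [isNoetherianRing_iff, isNoetherian_iff]
  rw [isNoetherianRing_iff, isNoetherian_iff] at hB
  let emb : Ideal A ↪o Ideal B :=
    { toFun := fun I => I.map (algebraMap A B)
      inj' := fun I J h => by
        have h2 := congrArg (Ideal.comap (algebraMap A B)) h
        simpa only [comap_map_eq_self_of_ff] using h2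
      map_rel_iff' := by
        intro I J
        constructor
        · intro h
          rw [← comap_map_eq_self_of_ff (A := A) (B := B) I,
            ← comap_map_eq_self_of_ff (A := A) (B := B) J]
          exact Ideal.comap_mono h
        · exact fun h => Ideal.map_mono h }
  exact OrderEmbedding.wellFounded emb.dual hB

end FF

private lemma flat_algebraMap' (R S : Type*) [CommRing R] [CommRing S] [Algebra R S]
    [Module.Flat R S] : RingHom.Flat (algebraMap R S) := by
  exact RingHom.flat_algebraMap_iff.mpr inferInstance

/-- For a nontrivial commutative ring `R`, TFAE: (1) there is a flat ring map from `R` to a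
nontrivial Noetherian ring; (2) some localization `R_p` at a prime is Noetherian; (3) some
localization `R_p` at a minimal prime is Artinian. -/
theorem stmt5 {R : Type u} [CommRing R] [Nontrivial R] :
    List.TFAE
      [∃ (S : Type u) (_ : CommRing S), Nontrivial S ∧ IsNoetherianRing S ∧
          ∃ φ : R →+* S, φ.Flat,
        ∃ p : PrimeSpectrum R, IsNoetherianRing (Localization.AtPrime p.asIdeal),
        ∃ p : PrimeSpectrum R, p.asIdeal ∈ minimalPrimes R ∧
          IsArtinianRing (Localization.AtPrime p.asIdeal)] := by
  tfae_have 1 → 2 := by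
    rintro ⟨S, _, hSnt, hSnoeth, φ, hφ⟩
    obtain ⟨m, hm⟩ := Ideal.exists_maximal S
    letI : Algebra R S := φ.toAlgebra
    haveI : Module.Flat R S := hφ
    haveI hp : (m.comap φ).IsPrime := hm.isPrime.comap φ
    set p : Ideal R := m.comap φ with hpdef
    set A := Localization.AtPrime p with hA
    set B := Localization.AtPrime m with hB
    haveI : Module.Flat R B := Module.Flat.trans R S B
    have units : ∀ y : p.primeCompl, IsUnit (algebraMap R B y) := by
      rintro ⟨y, hy⟩
      rw [IsScalarTower.algebraMap_apply R S B]
      exact IsLocalization.map_units B (⟨algebraMap R S y, hy⟩ : m.primeCompl)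
    letI ψ : A →+* B := IsLocalization.lift units
    letI : Algebra A B := ψ.toAlgebra
    haveI : IsScalarTower R A B :=
      IsScalarTower.of_algebraMap_eq' (IsLocalization.lift_comp (S := A) units).symm
    haveI : IsLocalizedModule p.primeCompl (LinearMap.id : B →ₗ[R] B) :=
      isLocalizedModule_id p.primeCompl B A
    haveI : Module.Flat A B :=
      Module.Flat.of_isLocalizedModule A p.primeCompl (LinearMap.id : B →ₗ[R] B)
    -- the induced map is local
    have hmapmax : Ideal.map (algebraMap A B) (IsLocalRing.maximalIdeal A)
        ≤ IsLocalRing.maximalIdeal B := by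
      rw [Ideal.map_le_iff_le_comap]
      intro x hx
      rw [Ideal.mem_comap]
      obtain ⟨⟨a, s⟩, rfl⟩ := IsLocalization.mk'_surjective p.primeCompl x
      have ha : a ∈ p := (IsLocalization.AtPrime.mk'_mem_maximal_iff A p a s).mp hx
      have key : IsLocalization.mk' A a s * algebraMap R A s.1 = algebraMap R A a :=
        IsLocalization.mk'_spec A a s
      have hmul : algebraMap A B (IsLocalization.mk' A a s) * algebraMap R B s.1
          = algebraMap R B a := by
        rw [IsScalarTower.algebraMap_apply R A B, IsScalarTower.algebraMap_apply R A B,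
          ← map_mul, key]
      have hmem : algebraMap R B a ∈ IsLocalRing.maximalIdeal B := by
        rw [IsScalarTower.algebraMap_apply R S B]
        exact (IsLocalization.AtPrime.to_map_mem_maximal_iff B m (algebraMap R S a)).mpr ha
      have hprime := (IsLocalRing.maximalIdeal.isMaximal B).isPrime
      rcases hprime.mem_or_mem (hmul ▸ hmem) with h | h
      · exact h
      · exact absurd (units s) h
    haveI hff : Module.FaithfullyFlat A B := by
      rw [Module.FaithfullyFlat.iff_flat_and_ideal_smul_eq_top]
      refine ⟨inferInstance, fun I hItop => ?_⟩
      by_contra hne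
      have hIle : I ≤ IsLocalRing.maximalIdeal A := IsLocalRing.le_maximalIdeal hne
      have hle2 : (⊤ : Submodule A B)
          ≤ (IsLocalRing.maximalIdeal B).restrictScalars A := by
        calc (⊤ : Submodule A B) = I • ⊤ := hItop.symm
        _ ≤ IsLocalRing.maximalIdeal A • ⊤ := Submodule.smul_mono hIle le_rfl
        _ = ((IsLocalRing.maximalIdeal A).map (algebraMap A B)).restrictScalars A :=
            Ideal.smul_top_eq_map _
        _ ≤ (IsLocalRing.maximalIdeal B).restrictScalars A := fun x hx => hmapmax hx
      have h1 : (1 : B) ∈ IsLocalRing.maximalIdeal B := hle2 trivial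
      exact (IsLocalRing.maximalIdeal.isMaximal B).ne_top ((Ideal.eq_top_iff_one _).mpr h1)
    haveI hBnoeth : IsNoetherianRing B :=
      IsLocalization.isNoetherianRing m.primeCompl B hSnoeth
    exact ⟨⟨p, hp⟩, isNoetherianRing_of_ff (A := A) (B := B) hBnoeth⟩
  tfae_have 2 → 3 := by
    rintro ⟨p, hploc⟩
    haveI := p.2
    obtain ⟨q, hq, hqle⟩ := Ideal.exists_minimalPrimes_le (bot_le (a := p.asIdeal))
    haveI hqprime : q.IsPrime := hq.1.1
    refine ⟨⟨q, hqprime⟩, hq, ?_⟩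
    set A := Localization.AtPrime p.asIdeal with hA
    set B := Localization.AtPrime q with hB
    have hle : p.asIdeal.primeCompl ≤ q.primeCompl := fun x hx hxq => hx (hqle hxq)
    have units : ∀ y : p.asIdeal.primeCompl, IsUnit (algebraMap R B y) := by
      rintro ⟨y, hy⟩
      exact IsLocalization.map_units B (⟨y, hle hy⟩ : q.primeCompl)
    letI : Algebra A B := (IsLocalization.lift units).toAlgebra
    haveI : IsScalarTower R A B :=
      IsScalarTower.of_algebraMap_eq' (IsLocalization.lift_comp (S := A) units).symm
    haveI := IsLocalization.isLocalization_of_submonoid_le A B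
      p.asIdeal.primeCompl q.primeCompl hle
    haveI hBnoeth : IsNoetherianRing B :=
      IsLocalization.isNoetherianRing (q.primeCompl.map (algebraMap R A)) B hploc
    -- every prime of B is the maximal ideal
    have huniq : ∀ P : Ideal B, P.IsPrime → P = IsLocalRing.maximalIdeal B := by
      intro P hP
      have hcomap := (IsLocalization.isPrime_iff_isPrime_disjoint q.primeCompl B P).mp hP
      have h1 : P.comap (algebraMap R B) ≤ q := by
        intro x hx
        by_contra hxq
        exact Set.disjoint_left.mp hcomap.2 hxq hx
      have h2 : q ≤ P.comap (algebraMap R B) := hq.2 ⟨hcomap.1, bot_le⟩ h1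
      have hc : P.comap (algebraMap R B)
          = (IsLocalRing.maximalIdeal B).comap (algebraMap R B) := by
        rw [show (IsLocalRing.maximalIdeal B).comap (algebraMap R B) = q from
          IsLocalization.AtPrime.comap_maximalIdeal (S := B) (I := q)]
        exact le_antisymm h1 h2
      calc P = Ideal.map (algebraMap R B) (P.comap (algebraMap R B)) :=
            (IsLocalization.map_comap q.primeCompl B P).symm
      _ = Ideal.map (algebraMap R B)
            ((IsLocalRing.maximalIdeal B).comap (algebraMap R B)) := by rw [hc]
      _ = IsLocalRing.maximalIdeal B :=
            IsLocalization.map_comap q.primeCompl B _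
    have hnil : nilradical B = IsLocalRing.maximalIdeal B := by
      rw [nilradical_eq_sInf]
      refine le_antisymm (sInf_le ?_) (le_sInf fun J hJ => (huniq J hJ).ge)
      exact (IsLocalRing.maximalIdeal.isMaximal B).isPrime
    obtain ⟨n, hn⟩ := IsNoetherianRing.isNilpotent_nilradical B
    rw [hnil] at hn
    exact isArtinianRing_of_pow_eq_bot (IsLocalRing.maximalIdeal.isMaximal B)
      (by rw [hn]; rfl)
  tfae_have 3 → 1 := by
    rintro ⟨q, hq, hart⟩
    haveI := q.2
    set B := Localization.AtPrime q.asIdeal with hB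
    haveI : IsArtinianRing B := hart
    obtain ⟨n, hn⟩ := IsArtinianRing.isNilpotent_jacobson_bot (R := B)
    rw [IsLocalRing.jacobson_eq_maximalIdeal ⊥ bot_ne_top] at hn
    haveI : IsNoetherianRing B :=
      isNoetherianRing_of_pow_eq_bot (IsLocalRing.maximalIdeal.isMaximal B)
        (by rw [hn]; rfl)
    exact ⟨B, inferInstance, inferInstance, inferInstance,
      algebraMap R B, flat_algebraMap' R B⟩
  tfae_finish
end

section
/- Let R be a nontrivial commutative ring. If there exist a nontrivial Noetherian ring S and a flat ring homomorphism S → R (i.e. R has property (**)), then the set of integers { char(R_p) | p a minimal prime of R } is finite, where char(R_p) denotes the characteristic of the localization R_p. -/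
universe u

lemma torsion_bound (S : Type u) [CommRing S] [IsNoetherianRing S] :
    ∃ N : ℕ, 0 < N ∧ ∀ s : S, (∃ n : ℕ, 0 < n ∧ n • s = 0) → N • s = 0 := by
  classical
  set T : Ideal S :=
    { carrier := {s | ∃ n : ℕ, 0 < n ∧ n • s = 0}
      add_mem' := by
        rintro a b ⟨n, hn, ha⟩ ⟨m, hm, hb⟩
        exact ⟨n * m, Nat.mul_pos hn hm, by
          rw [smul_add, mul_smul, mul_smul, smul_comm n m a, ha, hb, smul_zero, smul_zero,
            add_zero]⟩
      zero_mem' := ⟨1, one_pos, smul_zero 1⟩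
      smul_mem' := by
        rintro c x ⟨n, hn, hx⟩
        exact ⟨n, hn, by rw [smul_comm, hx, smul_zero]⟩ } with hTdef
  obtain ⟨F, hF⟩ := (isNoetherianRing_iff_ideal_fg S).mp ‹_› T
  choose n hn hns using fun x : {x // x ∈ F} =>
    (show (x : S) ∈ T from hF ▸ Ideal.subset_span x.2)
  refine ⟨∏ x ∈ F.attach, n x, Finset.prod_pos fun x _ => hn x, ?_⟩
  intro s hs
  have hsT' : s ∈ T := hs
  clear hs
  rw [← hF] at hsT'
  induction hsT' using Submodule.span_induction with
  | mem x hx =>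
      have : (∏ y ∈ F.attach, n y) = n ⟨x, hx⟩ * ∏ y ∈ F.attach.erase ⟨x, hx⟩, n y :=
        (Finset.mul_prod_erase F.attach n (Finset.mem_attach _ _)).symm
      rw [this, mul_comm, mul_smul, hns ⟨x, hx⟩, smul_zero]
  | zero => simp
  | add a b _ _ ha hb => rw [smul_add, ha, hb, add_zero]
  | smul c a _ ha => rw [smul_comm, ha, smul_zero]

/-- If a nontrivial commutative ring `R` has property (**) (there is a flat ring map to `R`
from a nontrivial Noetherian ring), then the set of characteristics of the localizations of
`R` at its minimal primes is finite. -/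
theorem stmt10 {R : Type u} [CommRing R] [Nontrivial R]
    (h : ∃ (S : Type u) (_ : CommRing S), Nontrivial S ∧ IsNoetherianRing S ∧
        ∃ φ : S →+* R, φ.Flat) :
    {n : ℕ | ∃ p : PrimeSpectrum R, p.asIdeal ∈ minimalPrimes R ∧
      n = ringChar (Localization.AtPrime p.asIdeal)}.Finite := by
  obtain ⟨S, _, hSnt, hNoeth, φ, hφ⟩ := h
  letI := φ.toAlgebra
  haveI : Module.Flat S R := hφ
  obtain ⟨N, hNpos, hN⟩ := torsion_bound S
  apply Set.Finite.subset (Set.finite_Iic N)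
  rintro n ⟨p, -, rfl⟩
  set L := Localization.AtPrime p.asIdeal with hL
  by_cases h0 : ringChar L = 0
  · show ringChar L ≤ N; simp [h0]
  have hcast : ((ringChar L : ℕ) : L) = 0 := ringChar.Nat.cast_ringChar
  have hmap : algebraMap R L ((ringChar L : ℕ) : R) = 0 := by
    rw [map_natCast]; exact hcast
  obtain ⟨t, ht⟩ := (IsLocalization.map_eq_zero_iff p.asIdeal.primeCompl L _).mp hmap
  have hrel : ∑ _i : PUnit.{u+1}, ((ringChar L : ℕ) : S) • (t : R) = 0 := by
    have : ((ringChar L : ℕ) : S) • (t : R) = ((ringChar L : ℕ) : R) * (t : R) := by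
      rw [Algebra.smul_def, RingHom.algebraMap_toAlgebra, map_natCast]
    rw [Fintype.sum_unique, this, mul_comm]
    exact ht
  obtain ⟨κ, a, y, hx, ha⟩ :=
    Module.Flat.isTrivialRelation_of_sum_smul_eq_zero
      (f := fun _ : PUnit.{u+1} => ((ringChar L : ℕ) : S)) (x := fun _ => (t : R)) hrel
  have hNt : N • (t : R) = 0 := by
    rw [show (t : R) = _ from hx PUnit.unit, Finset.smul_sum]
    refine Finset.sum_eq_zero fun j _ => ?_
    have haj : ((ringChar L : ℕ) : S) * a PUnit.unit j = 0 := by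
      simpa using ha j
    have hNa : N • a PUnit.unit j = 0 :=
      hN _ ⟨ringChar L, Nat.pos_of_ne_zero h0, by rw [nsmul_eq_mul]; exact haj⟩
    rw [← smul_assoc, hNa, zero_smul]
  have hmapN : algebraMap R L ((N : ℕ) : R) = 0 :=
    (IsLocalization.map_eq_zero_iff p.asIdeal.primeCompl L _).mpr
      ⟨t, by rw [mul_comm, ← nsmul_eq_mul]; exact hNt⟩
  have : ((N : ℕ) : L) = 0 := by rw [← map_natCast (algebraMap R L)]; exact hmapN
  exact Nat.le_of_dvd hNpos (ringChar.dvd this)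
end

section
/- Let R₁ := ℤ[t₁, t₂, …]/(t_i t_j : i, j ≥ 1) be the quotient of the polynomial ring over ℤ in countably many variables t₁, t₂, … by the ideal generated by all products t_i t_j. Then R₁ does not have property (*): there is no flat ring homomorphism from R₁ to any nontrivial Noetherian commutative ring. -/
universe u

open MvPolynomial

private def mdeg (m : ℕ →₀ ℕ) : ℕ := m.sum fun _ n => n

private lemma mdeg_add (m n : ℕ →₀ ℕ) : mdeg (m + n) = mdeg m + mdeg n := by
  unfold mdeg
  exact Finsupp.sum_add_index' (fun _ => rfl) (fun _ _ _ => rfl)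

private lemma mdeg_single (i : ℕ) : mdeg (Finsupp.single i 1) = 1 := by
  unfold mdeg
  simp [Finsupp.sum_single_index]

private lemma low_coeff_zero {q : MvPolynomial ℕ ℤ}
    (hq : q ∈ Ideal.span {f : MvPolynomial ℕ ℤ |
      ∃ i j : ℕ, f = MvPolynomial.X i * MvPolynomial.X j}) :
    ∀ m : ℕ →₀ ℕ, mdeg m ≤ 1 → MvPolynomial.coeff m q = 0 := by
  refine Submodule.span_induction ?_ ?_ ?_ ?_ hq
  · rintro f ⟨i, j, rfl⟩ m hm
    have hX : (MvPolynomial.X i * MvPolynomial.X j : MvPolynomial ℕ ℤ)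
        = monomial (Finsupp.single i 1 + Finsupp.single j 1) 1 := by
      rw [MvPolynomial.X, MvPolynomial.X, monomial_mul, one_mul]
    rw [hX, coeff_monomial]
    split
    · next h =>
      exfalso
      have := congrArg mdeg h
      rw [mdeg_add, mdeg_single, mdeg_single] at this
      omega
    · rfl
  · intro m _; simp
  · intro x y _ _ hx hy m hm
    rw [coeff_add, hx m hm, hy m hm, add_zero]
  · intro r x _ hx m hm
    rw [smul_eq_mul, coeff_mul]
    refine Finset.sum_eq_zero fun z hz => ?_
    rw [Finset.HasAntidiagonal.mem_antidiagonal] at hz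
    have h2 : mdeg z.2 ≤ 1 := by
      have : mdeg z.1 + mdeg z.2 = mdeg m := by rw [← mdeg_add, hz]
      omega
    rw [hx z.2 h2, mul_zero]

private lemma mem_span_X_of_constantCoeff {p : MvPolynomial ℕ ℤ}
    (h : MvPolynomial.coeff 0 p = 0) :
    p ∈ Ideal.span (Set.range (MvPolynomial.X : ℕ → MvPolynomial ℕ ℤ)) := by
  rw [← Set.image_univ, MvPolynomial.mem_ideal_span_X_image]
  intro m hm
  by_contra hc
  push_neg at hc
  have hm0 : m = 0 := by
    ext i; exact hc i (Set.mem_univ i)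
  rw [MvPolynomial.mem_support_iff, hm0] at hm
  exact hm h

attribute [-instance] ULift.smulLeft in
/-- Abstract core argument: if `R` contains a sequence `t` with `tᵢtⱼ = 0` and the property that
in any relation `∑ tᵢ bᵢ = 0` (over `Fin (n+1)`) the last coefficient lies in the ideal generated
by the `t`'s, then there is no flat hom from `R` to a nontrivial Noetherian ring. -/
private theorem aux {R : Type} [CommRing R] (S : Type u) [CommRing S] [Nontrivial S]
    [IsNoetherianRing S] (φ : R →+* S) (t : ℕ → R)
    (ht : ∀ i j : ℕ, t i * t j = 0)
    (hlast : ∀ (n : ℕ) (b : Fin (n+1) → R),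
      (∑ i : Fin (n+1), t i * b i = 0) → b (Fin.last n) ∈ Ideal.span (Set.range t))
    (hflat : φ.Flat) : False := by
  let a : ℕ → S := fun i => φ (t i)
  have ha : ∀ i j : ℕ, a i * a j = 0 := by
    intro i j
    calc a i * a j = φ (t i * t j) := (map_mul φ _ _).symm
      _ = 0 := by rw [ht i j, map_zero]
  -- algebra setup
  let R' := ULift.{u} R
  let e : R' ≃+* R := ULift.ringEquiv
  letI : Algebra R S := φ.toAlgebra
  letI : Algebra R' R := e.toRingHom.toAlgebra
  letI : Algebra R' S := (φ.comp e.toRingHom).toAlgebra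
  haveI tower : IsScalarTower R' R S := IsScalarTower.of_algebraMap_eq fun r => rfl
  haveI hfRS : Module.Flat R S := hflat
  haveI hfR'R : Module.Flat R' R := by
    have le : R ≃ₗ[R'] R' :=
      { toFun := fun x => ULift.up x
        invFun := ULift.down
        map_add' := fun x y => rfl
        map_smul' := fun r x => rfl
        left_inv := fun x => rfl
        right_inv := fun x => rfl }
    exact Module.Flat.of_linearEquiv le
  haveI hfS : Module.Flat R' S := @Module.Flat.trans R' R S _ _ _ _ _ _ tower hfR'R hfRS
  -- Noetherian: chain of ideals stabilizes
  obtain ⟨n₀, hn₀⟩ := monotone_stabilizes_iff_noetherian.mpr ‹IsNoetherianRing S›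
    ⟨fun n => Ideal.span (Set.range fun i : Fin n => a i), by
      intro n m hnm
      apply Ideal.span_mono
      rintro _ ⟨i, rfl⟩
      exact ⟨Fin.castLE hnm i, rfl⟩⟩
  have hmem : a n₀ ∈ Ideal.span (Set.range fun i : Fin n₀ => a i) := by
    have h1 : a n₀ ∈ Ideal.span (Set.range fun i : Fin (n₀+1) => a i) :=
      Ideal.subset_span ⟨Fin.last n₀, rfl⟩
    have h2 : Ideal.span (Set.range fun i : Fin n₀ => a i)
        = Ideal.span (Set.range fun i : Fin (n₀+1) => a i) := hn₀ (n₀+1) (Nat.le_succ n₀)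
    rw [h2]
    exact h1
  have hmem' : a n₀ ∈ Submodule.span S (Set.range fun i : Fin n₀ => a i) := hmem
  rw [Submodule.mem_span_range_iff_exists_fun] at hmem'
  obtain ⟨c, hc⟩ := hmem'
  simp only [smul_eq_mul] at hc
  -- the relation
  let ι := ULift.{u} (Fin (n₀+1))
  let f : ι → R' := fun i => ULift.up (t (i.down : ℕ))
  let x : ι → S := fun i => if h : (i.down : ℕ) < n₀ then c ⟨i.down, h⟩ else -1
  have hsmul : ∀ (r : R') (s : S), r • s = φ (e r) * s := fun r s => rfl
  have hrel : ∑ i : ι, f i • x i = 0 := by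
    have h1 : ∑ i : ι, f i • x i
        = ∑ i : Fin (n₀+1), a i * (if h : (i : ℕ) < n₀ then c ⟨i, h⟩ else -1) := by
      refine Fintype.sum_equiv Equiv.ulift _ _ fun i => ?_
      rw [hsmul]
      rfl
    rw [h1, Fin.sum_univ_castSucc]
    have hlastv : ((Fin.last n₀ : Fin (n₀+1)) : ℕ) = n₀ := rfl
    rw [hlastv, dif_neg (lt_irrefl n₀)]
    have h2 : ∀ i : Fin n₀, a (Fin.castSucc i) *
        (if h : ((Fin.castSucc i : Fin (n₀+1)) : ℕ) < n₀ then c ⟨_, h⟩ else -1)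
        = c i * a i := by
      intro i
      have hcast : ((i.castSucc : Fin (n₀+1)) : ℕ) = (i : ℕ) := rfl
      simp only [hcast]
      rw [dif_pos i.isLt, mul_comm]
    rw [Finset.sum_congr rfl fun i _ => h2 i, hc]
    ring
  obtain ⟨κ', A, y, hx, hA⟩ := Module.Flat.isTrivialRelation_of_sum_smul_eq_zero hrel
  let κ := Fin κ'
  let i₀ : ι := ULift.up (Fin.last n₀)
  let J : Ideal S := Ideal.span (Set.range a)
  have hAmem : ∀ j : κ, φ (e (A i₀ j)) ∈ J := by
    intro j
    have h0 : ∑ i : Fin (n₀+1), t i * e (A (ULift.up i) j) = 0 := by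
      have h1 := congrArg e (hA j)
      rw [map_sum, map_zero] at h1
      rw [← h1]
      refine (Fintype.sum_equiv Equiv.ulift _ _ fun i => ?_).symm
      rw [map_mul]
      rfl
    have hb := hlast n₀ (fun i => e (A (ULift.up i) j)) h0
    have hmap : φ (e (A (ULift.up (Fin.last n₀)) j)) ∈ Ideal.map φ (Ideal.span (Set.range t)) :=
      Ideal.mem_map_of_mem φ hb
    refine Ideal.map_le_iff_le_comap.mpr ?_ hmap
    rw [Ideal.span_le]
    rintro _ ⟨i, rfl⟩
    show φ (t i) ∈ J
    exact Ideal.subset_span ⟨i, rfl⟩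
  have hone : (1 : S) ∈ J := by
    have hx0 : (-1 : S) = ∑ j : κ, A i₀ j • y j := by
      have h1 := hx i₀
      have hxi : x i₀ = -1 := dif_neg (lt_irrefl n₀)
      rw [← hxi]
      exact h1
    have hneg : (-1 : S) ∈ J := by
      rw [hx0]
      refine Ideal.sum_mem _ fun j _ => ?_
      rw [hsmul]
      exact Ideal.mul_mem_right _ _ (hAmem j)
    simpa using J.neg_mem hneg
  have hann : ∀ z ∈ J, ∀ i : ℕ, z * a i = 0 := by
    intro z hz
    refine Submodule.span_induction ?_ ?_ ?_ ?_ hz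
    · rintro _ ⟨j, rfl⟩ i; exact ha j i
    · intro i; simp
    · intro u v _ _ hu hv i
      rw [add_mul, hu i, hv i, add_zero]
    · intro r u _ hu i
      rw [smul_eq_mul, mul_assoc, hu i, mul_zero]
  have hzero : ∀ i : ℕ, a i = 0 := by
    intro i
    have h1 := hann 1 hone i
    rwa [one_mul] at h1
  have hcontra : (1 : S) = 0 := by
    have hJ : J ≤ ⊥ := by
      rw [Ideal.span_le]
      rintro _ ⟨i, rfl⟩
      simp [hzero i]
    exact hJ hone
  exact one_ne_zero hcontra

/-- The ring `R₁ = ℤ[t₁, t₂, …]/(tᵢtⱼ : i, j ≥ 1)` admits no flat ring homomorphism to any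
nontrivial Noetherian commutative ring. -/
theorem stmt12 (S : Type u) [CommRing S] [Nontrivial S] [IsNoetherianRing S]
    (φ : (MvPolynomial ℕ ℤ ⧸
        Ideal.span {f : MvPolynomial ℕ ℤ |
          ∃ i j : ℕ, f = MvPolynomial.X i * MvPolynomial.X j}) →+* S) :
    ¬ φ.Flat := by
  intro hflat
  classical
  refine aux S φ (fun i => Ideal.Quotient.mk _ (MvPolynomial.X i)) ?_ ?_ hflat
  · intro i j
    rw [← map_mul, Ideal.Quotient.eq_zero_iff_mem]
    exact Ideal.subset_span ⟨i, j, rfl⟩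
  · intro n b hsum
    -- lift b to polynomials
    choose p hp using fun i : Fin (n+1) =>
      Ideal.Quotient.mk_surjective (I := Ideal.span {f : MvPolynomial ℕ ℤ |
        ∃ i j : ℕ, f = MvPolynomial.X i * MvPolynomial.X j}) (b i)
    have hq : (∑ i : Fin (n+1), MvPolynomial.X (i : ℕ) * p i) ∈
        Ideal.span {f : MvPolynomial ℕ ℤ | ∃ i j : ℕ, f = MvPolynomial.X i * MvPolynomial.X j} := by
      rw [← Ideal.Quotient.eq_zero_iff_mem, map_sum, ← hsum]
      refine Finset.sum_congr rfl fun i _ => ?_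
      rw [map_mul, hp i]
    have hcoeff := low_coeff_zero hq (Finsupp.single (n : ℕ) 1) (le_of_eq (mdeg_single n))
    rw [MvPolynomial.coeff_sum] at hcoeff
    have hterm : ∀ i : Fin (n+1), MvPolynomial.coeff (Finsupp.single (n : ℕ) 1)
        (MvPolynomial.X (i : ℕ) * p i)
        = if i = Fin.last n then MvPolynomial.coeff 0 (p (Fin.last n)) else 0 := by
      intro i
      rw [MvPolynomial.coeff_X_mul']
      by_cases hi : i = Fin.last n
      · subst hi
        rw [if_pos, if_pos rfl]
        · congr 1
          simp [Fin.val_last]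
        · simp [Finsupp.mem_support_iff, Fin.val_last]
      · rw [if_neg, if_neg hi]
        intro hmem
        apply hi
        rw [Finsupp.mem_support_iff, Finsupp.single_apply] at hmem
        have hv : (i : ℕ) = n := by
          by_contra hne
          rw [if_neg (fun h => hne h.symm)] at hmem
          exact hmem rfl
        exact Fin.ext (by rw [hv, Fin.val_last])
    rw [Finset.sum_congr rfl fun i _ => hterm i, Finset.sum_ite_eq'] at hcoeff
    simp only [Finset.mem_univ, if_pos] at hcoeff
    have hpmem := mem_span_X_of_constantCoeff hcoeff
    have hb : b (Fin.last n) = Ideal.Quotient.mk _ (p (Fin.last n)) := (hp (Fin.last n)).symm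
    rw [hb]
    have hmap : Ideal.Quotient.mk _ (p (Fin.last n)) ∈
        Ideal.map (Ideal.Quotient.mk (Ideal.span {f : MvPolynomial ℕ ℤ |
          ∃ i j : ℕ, f = MvPolynomial.X i * MvPolynomial.X j}))
        (Ideal.span (Set.range (MvPolynomial.X : ℕ → MvPolynomial ℕ ℤ))) :=
      Ideal.mem_map_of_mem _ hpmem
    refine Ideal.map_le_iff_le_comap.mpr ?_ hmap
    rw [Ideal.span_le]
    rintro _ ⟨i, rfl⟩
    exact Ideal.subset_span ⟨i, rfl⟩
end

section
/- Let R₂ := ℤ[x_p : p prime]/(p·x_p : p prime) be the quotient of the polynomial ring over ℤ in variables x_p indexed by the prime numbers, by the ideal generated by the elements p·x_p for all primes p. Then R₂ does not have property (**): there is no flat ring homomorphism from any nontrivial Noetherian commutative ring to R₂. -/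
universe u

open MvPolynomial

abbrev Rq : Type := MvPolynomial Nat.Primes ℤ ⧸
        Ideal.span {f : MvPolynomial Nat.Primes ℤ |
          ∃ p : Nat.Primes, f = MvPolynomial.C ((p : ℕ) : ℤ) * MvPolynomial.X p}

/-- torsion ideal -/
def torsId (S : Type u) [CommRing S] : Ideal S where
  carrier := {s | ∃ n : ℕ, 0 < n ∧ (n : S) * s = 0}
  zero_mem' := ⟨1, one_pos, by simp⟩
  add_mem' := by
    rintro a b ⟨n, hn, ha⟩ ⟨m, hm, hb⟩
    refine ⟨n * m, Nat.mul_pos hn hm, ?_⟩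
    push_cast
    calc (n : S) * m * (a + b) = (m : S) * ((n : S) * a) + (n : S) * ((m : S) * b) := by ring
    _ = 0 := by rw [ha, hb]; ring
  smul_mem' := by
    rintro c s ⟨n, hn, hs⟩
    exact ⟨n, hn, by rw [smul_eq_mul, mul_left_comm, hs, mul_zero]⟩

lemma Xp_ne_zero (p : Nat.Primes) :
    (Ideal.Quotient.mk _ (MvPolynomial.X p) : Rq) ≠ 0 := by
  intro h
  rw [Ideal.Quotient.eq_zero_iff_mem] at h
  haveI : Fact (1 < (p : ℕ)) := ⟨p.2.one_lt⟩
  set ψ : MvPolynomial Nat.Primes ℤ →+* ZMod p :=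
    eval₂Hom (Int.castRingHom (ZMod p)) (fun q => if q = p then 1 else 0) with hψ
  have hker : Ideal.span {f : MvPolynomial Nat.Primes ℤ |
      ∃ q : Nat.Primes, f = MvPolynomial.C ((q : ℕ) : ℤ) * MvPolynomial.X q} ≤
      RingHom.ker ψ := by
    rw [Ideal.span_le]
    rintro f ⟨q, rfl⟩
    simp only [SetLike.mem_coe, RingHom.mem_ker, map_mul, hψ, eval₂Hom_C, eval₂Hom_X']
    by_cases hq : q = p
    · subst hq
      simp [ZMod.natCast_self]
    · simp [hq]
  have := hker h
  rw [RingHom.mem_ker] at this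
  simp [hψ] at this

set_option synthInstance.maxHeartbeats 1000000
set_option maxHeartbeats 1000000

/-- The ring `R₂ = ℤ[xₚ : p prime]/(p·xₚ : p prime)` admits no flat ring homomorphism from any
nontrivial Noetherian commutative ring. -/
theorem stmt13 (S : Type u) [CommRing S] [Nontrivial S] [IsNoetherianRing S]
    (φ : S →+* (MvPolynomial Nat.Primes ℤ ⧸
        Ideal.span {f : MvPolynomial Nat.Primes ℤ |
          ∃ p : Nat.Primes, f = MvPolynomial.C ((p : ℕ) : ℤ) * MvPolynomial.X p})) :
    ¬ φ.Flat := by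
  intro hflat
  letI := φ.toAlgebra
  haveI : Module.Flat S Rq := hflat
  -- every prime is a zero divisor in S
  have hzd : ∀ p : Nat.Primes, ∃ s : S, s ≠ 0 ∧ ((p : ℕ) : S) * s = 0 := by
    intro p
    have hreg : ¬ IsSMulRegular (Rq) ((p : ℕ) : S) := by
      intro hreg
      apply Xp_ne_zero p
      have h0 : ((p : ℕ) : S) • (Ideal.Quotient.mk _ (MvPolynomial.X p) : Rq) =
          ((p : ℕ) : S) • (0 : Rq) := by
        rw [Algebra.smul_def, Algebra.smul_def, mul_zero]
        have : algebraMap S Rq = φ := rfl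
        rw [this, map_natCast]
        rw [show ((p : ℕ) : Rq) = Ideal.Quotient.mk _ (((p:ℕ) : ℤ) : MvPolynomial Nat.Primes ℤ) by
          push_cast; rw [map_natCast]]
        rw [← map_mul, Ideal.Quotient.eq_zero_iff_mem]
        apply Ideal.subset_span
        exact ⟨p, by push_cast [MvPolynomial.C_eq_coe_nat]; ring⟩
      exact hreg h0
    have hSreg : ¬ IsSMulRegular S ((p : ℕ) : S) := by
      intro hS
      exact hreg (((TensorProduct.rid S Rq).isSMulRegular_congr _).mp (hS.lTensor Rq))
    rw [IsSMulRegular] at hSreg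
    simp only [Function.Injective, not_forall] at hSreg
    obtain ⟨a, b, hab, hne⟩ := hSreg
    refine ⟨a - b, sub_ne_zero.mpr hne, ?_⟩
    simp only [smul_eq_mul] at hab
    rw [mul_sub, hab, sub_self]
  -- torsion ideal is killed by one N
  obtain ⟨T, hT⟩ := IsNoetherian.noetherian (torsId S)
  classical
  set ntor : S → ℕ := fun s => if h : s ∈ torsId S then h.choose else 1 with hntor
  set N : ℕ := ∏ t ∈ T, ntor t with hN
  have hNpos : 0 < N := by
    apply Finset.prod_pos
    intro t _
    by_cases h : t ∈ torsId S
    · simp only [hntor, dif_pos h]; exact h.choose_spec.1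
    · simp [hntor, dif_neg h]
  have hkill : ∀ s ∈ torsId S, (N : S) * s = 0 := by
    have hle : torsId S ≤ LinearMap.ker (LinearMap.lsmul S S (N : S)) := by
      rw [← hT, Submodule.span_le]
      intro t ht
      rw [Finset.mem_coe] at ht
      have htT : t ∈ torsId S := by
        rw [← hT]; exact Submodule.subset_span ht
      have h1 : ((ntor t : ℕ) : S) * t = 0 := by
        simp only [hntor, dif_pos htT]
        exact htT.choose_spec.2
      obtain ⟨m, hm⟩ := Finset.dvd_prod_of_mem ntor ht
      simp only [SetLike.mem_coe, LinearMap.mem_ker, LinearMap.lsmul_apply, smul_eq_mul]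
      calc (N : S) * t = (m : S) * (((ntor t : ℕ) : S) * t) := by
            rw [hN, hm]; push_cast; ring
        _ = 0 := by rw [h1, mul_zero]
    intro s hs
    simpa using hle hs
  obtain ⟨p, hpN, hp⟩ := Nat.exists_infinite_primes (N + 1)
  obtain ⟨s, hs0, hps⟩ := hzd ⟨p, hp⟩
  have hNs : (N : S) * s = 0 := hkill s ⟨p, hp.pos, hps⟩
  have hcop : Nat.Coprime p N :=
    (Nat.Prime.coprime_iff_not_dvd hp).mpr
      (fun hdvd => absurd (Nat.le_of_dvd hNpos hdvd) (by omega))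
  have hic : IsCoprime (p : ℤ) (N : ℤ) := Int.isCoprime_iff_gcd_eq_one.mpr (by
    rw [Int.gcd_natCast_natCast]; exact hcop)
  obtain ⟨a, b, hab⟩ := hic
  apply hs0
  have h1 : ((a : S) * ((p : ℕ) : S) + (b : S) * ((N : ℕ) : S)) = 1 := by
    have h2 := congrArg (Int.cast : ℤ → S) hab
    push_cast at h2
    exact h2
  calc s = ((a : S) * ((p : ℕ) : S) + (b : S) * ((N : ℕ) : S)) * s := by
        rw [h1, one_mul]
    _ = (a : S) * (((p : ℕ) : S) * s) + (b : S) * ((N : S) * s) := by ring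
    _ = 0 := by rw [hps, hNs]; ring
end

section
/- Let R₃ := ℤ[t_i, x_p : i ≥ 1, p prime]/(t_i t_j, p·x_p : i, j ≥ 1, p prime) be the quotient of the polynomial ring over ℤ in variables t₁, t₂, … and x_p (p ranging over prime numbers) by the ideal generated by all products t_i t_j and all elements p·x_p. Then R₃ has neither property (*) nor property (**): there is no flat ring homomorphism from R₃ to any nontrivial Noetherian ring, and no flat ring homomorphism from any nontrivial Noetherian ring to R₃. -/
universe u

open MvPolynomial in
/-- The ring `R₃ = ℤ[tᵢ, xₚ : i ≥ 1, p prime]/(tᵢtⱼ, p·xₚ)`. -/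
abbrev R3 : Type :=
  MvPolynomial (ℕ ⊕ Nat.Primes) ℤ ⧸
    Ideal.span
      ({f : MvPolynomial (ℕ ⊕ Nat.Primes) ℤ |
          ∃ i j : ℕ, f = X (Sum.inl i) * X (Sum.inl j)} ∪
        {f : MvPolynomial (ℕ ⊕ Nat.Primes) ℤ |
          ∃ p : Nat.Primes, f = C ((p : ℕ) : ℤ) * X (Sum.inr p)})

namespace Stmt14

open MvPolynomial

abbrev Sig : Type := ℕ ⊕ Nat.Primes
abbrev P3 : Type := MvPolynomial Sig ℤ

noncomputable def Isp : Ideal P3 :=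
  Ideal.span
    ({f : MvPolynomial (ℕ ⊕ Nat.Primes) ℤ |
        ∃ i j : ℕ, f = X (Sum.inl i) * X (Sum.inl j)} ∪
      {f : MvPolynomial (ℕ ⊕ Nat.Primes) ℤ |
        ∃ p : Nat.Primes, f = C ((p : ℕ) : ℤ) * X (Sum.inr p)})

/-- weight used for gcd: `0` on the `t` variables, `p` on `x_p`. -/
def w : Sig → ℕ := Sum.elim (fun _ => 0) (fun p => (p : ℕ))

/-- total degree in the `t` variables. -/
def td (m : Sig →₀ ℕ) : ℕ := m.sum fun s k => Sum.elim (fun _ => k) (fun _ => 0) s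

def gg (m : Sig →₀ ℕ) : ℕ := m.support.gcd w

noncomputable def DD (m : Sig →₀ ℕ) : ℤ := if 2 ≤ td m then 1 else (gg m : ℤ)

lemma td_add (a b : Sig →₀ ℕ) : td (a + b) = td a + td b := by
  refine Finsupp.sum_add_index' ?_ ?_
  · intro s; cases s <;> rfl
  · intro s k l; cases s <;> simp

lemma td_single_inl (i : ℕ) (k : ℕ) : td (Finsupp.single (Sum.inl i : Sig) k) = k := by
  rw [td, Finsupp.sum_single_index] <;> rfl

lemma td_single_inr (p : Nat.Primes) (k : ℕ) : td (Finsupp.single (Sum.inr p : Sig) k) = 0 := by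
  rw [td, Finsupp.sum_single_index] <;> rfl

lemma td_apply_inl {m : Sig →₀ ℕ} (h : td m = 0) (i : ℕ) : m (Sum.inl i) = 0 := by
  by_contra hne
  have hmem : (Sum.inl i : Sig) ∈ m.support := Finsupp.mem_support_iff.mpr hne
  unfold td Finsupp.sum at h
  have h2 := (Finset.sum_eq_zero_iff).mp h _ hmem
  exact hne h2

lemma exists_split {m : Sig →₀ ℕ} (h : td m ≠ 0) :
    ∃ (i : ℕ) (m' : Sig →₀ ℕ), m = Finsupp.single (Sum.inl i) 1 + m' := by
  unfold td Finsupp.sum at h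
  obtain ⟨s, hs, hval⟩ := Finset.exists_ne_zero_of_sum_ne_zero h
  obtain (i | p) := s
  · have h1 : (1 : ℕ) ≤ m (Sum.inl i) := by
      have := Finsupp.mem_support_iff.mp hs
      omega
    exact ⟨i, m - Finsupp.single (Sum.inl i) 1,
      (add_tsub_cancel_of_le (Finsupp.single_le_iff.mpr h1)).symm⟩
  · simp at hval

lemma support_subset_left {u v : Sig →₀ ℕ} : u.support ⊆ (u + v).support := by
  intro s hs
  simp only [Finsupp.mem_support_iff, Finsupp.add_apply] at *
  omega

lemma support_subset_right {u v : Sig →₀ ℕ} : v.support ⊆ (u + v).support := by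
  intro s hs
  simp only [Finsupp.mem_support_iff, Finsupp.add_apply] at *
  omega

lemma gg_dvd {v m : Sig →₀ ℕ} (h : v.support ⊆ m.support) : gg m ∣ gg v :=
  Finset.dvd_gcd fun s hs => Finset.gcd_dvd (h hs)

lemma DD_dvd_right {u v m : Sig →₀ ℕ} (h : u + v = m) : DD m ∣ DD v := by
  unfold DD
  by_cases hm : 2 ≤ td m
  · simp [hm]
  · have hv : ¬ 2 ≤ td v := by
      have h2 := td_add u v
      rw [h] at h2
      omega
    rw [if_neg hm, if_neg hv]
    exact_mod_cast gg_dvd (h ▸ support_subset_right)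

lemma DD_dvd_left {u v m : Sig →₀ ℕ} (h : u + v = m) : DD m ∣ DD u := by
  rw [add_comm] at h
  exact DD_dvd_right h

noncomputable def MM : Ideal P3 where
  carrier := {f | ∀ m, DD m ∣ coeff m f}
  add_mem' := fun {a b} ha hb m => by rw [coeff_add]; exact dvd_add (ha m) (hb m)
  zero_mem' := fun m => by simp
  smul_mem' := fun c f hf => by
    intro m
    rw [smul_eq_mul, coeff_mul]
    refine Finset.dvd_sum fun uv huv => ?_
    have h := Finset.HasAntidiagonal.mem_antidiagonal.mp huv
    exact ((DD_dvd_right h).trans (hf uv.2)).mul_left _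

lemma mem_MM_iff {f : P3} : f ∈ MM ↔ ∀ m, DD m ∣ coeff m f := Iff.rfl

lemma Isp_le_MM : Isp ≤ MM := by
  rw [Isp, Ideal.span_le]
  rintro f (⟨i, j, rfl⟩ | ⟨p, rfl⟩)
  · intro m
    rw [show (X (Sum.inl i) * X (Sum.inl j) : P3)
        = monomial (Finsupp.single (Sum.inl i) 1 + Finsupp.single (Sum.inl j) 1) 1 by
      rw [X, X, monomial_mul, one_mul]]
    rw [coeff_monomial]
    split
    · next heq =>
      have h2 : 2 ≤ td m := by rw [← heq, td_add, td_single_inl, td_single_inl]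
      rw [DD, if_pos h2]
    · exact dvd_zero _
  · intro m
    rw [show (C ((p : ℕ) : ℤ) * X (Sum.inr p) : P3)
        = monomial (Finsupp.single (Sum.inr p) 1) ((p : ℕ) : ℤ) by
      rw [X, C_mul_monomial, mul_one]]
    rw [coeff_monomial]
    split
    · next heq =>
      have h2 : ¬ 2 ≤ td m := by rw [← heq, td_single_inr]; omega
      rw [DD, if_neg h2]
      have h3 : gg m = (p : ℕ) := by
        rw [← heq, gg, Finsupp.support_single_ne_zero _ one_ne_zero, Finset.gcd_singleton]
        exact normalize_eq _
      rw [h3]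
    · exact dvd_zero _

lemma monomial_mem_aux (m : Sig →₀ ℕ) :
    ∀ s : Finset Sig, s ⊆ m.support → ∀ c : ℤ, ((s.gcd w : ℕ) : ℤ) ∣ c →
      (monomial m) c ∈ Isp := by
  intro s
  induction s using Finset.induction_on with
  | empty =>
    intro _ c hc
    rw [Finset.gcd_empty] at hc
    rw [show c = 0 by exact_mod_cast zero_dvd_iff.mp (by exact_mod_cast hc)]
    simp
  | @insert a s ha ih =>
    intro hsub c hc
    rw [Finset.gcd_insert, gcd_eq_nat_gcd] at hc
    obtain ⟨e, rfl⟩ := hc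
    have hbez := Nat.gcd_eq_gcd_ab (w a) (s.gcd w)
    have hc2 : ((Nat.gcd (w a) (s.gcd w) : ℕ) : ℤ) * e
        = (w a : ℤ) * (Nat.gcdA (w a) (s.gcd w) * e)
          + ((s.gcd w : ℕ) : ℤ) * (Nat.gcdB (w a) (s.gcd w) * e) := by
      rw [hbez]; ring
    rw [hc2, map_add]
    refine Ideal.add_mem _ ?_
      (ih (fun x hx => hsub (Finset.mem_insert_of_mem hx)) _ ⟨_, rfl⟩)
    obtain (i | p) := a
    · have h0 : (w (Sum.inl i) : ℤ) = 0 := rfl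
      rw [h0, zero_mul, map_zero]
      exact Ideal.zero_mem _
    · have hmem : (Sum.inr p : Sig) ∈ m.support := hsub (Finset.mem_insert_self _ _)
      have hle : Finsupp.single (Sum.inr p : Sig) 1 ≤ m :=
        Finsupp.single_le_iff.mpr (by
          have := Finsupp.mem_support_iff.mp hmem; omega)
      have heq : (monomial m) ((w (Sum.inr p) : ℤ) * (Nat.gcdA (w (Sum.inr p)) (s.gcd w) * e))
          = (C ((p : ℕ) : ℤ) * X (Sum.inr p))
            * (monomial (m - Finsupp.single (Sum.inr p) 1))
              (Nat.gcdA (w (Sum.inr p)) (s.gcd w) * e) := by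
        rw [X, C_mul_monomial, mul_one, monomial_mul, add_tsub_cancel_of_le hle]
        rfl
      rw [heq]
      exact Ideal.mul_mem_right _ _ (Ideal.subset_span (Set.mem_union_right _ ⟨p, rfl⟩))

lemma monomial_mem (m : Sig →₀ ℕ) (c : ℤ) (h : DD m ∣ c) : (monomial m) c ∈ Isp := by
  by_cases h2 : 2 ≤ td m
  · obtain ⟨i, m1, hm1⟩ := exists_split (m := m) (by omega)
    have h3 : td m1 ≠ 0 := by
      rw [hm1, td_add, td_single_inl] at h2
      omega
    obtain ⟨j, m2, hm2⟩ := exists_split h3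
    have heq : (monomial m) c = (X (Sum.inl i) * X (Sum.inl j)) * (monomial m2) c := by
      rw [X, X, monomial_mul, monomial_mul, one_mul, one_mul, hm1, hm2, add_assoc]
    rw [heq]
    exact Ideal.mul_mem_right _ _ (Ideal.subset_span (Set.mem_union_left _ ⟨i, j, rfl⟩))
  · rw [DD, if_neg h2] at h
    exact monomial_mem_aux m m.support (subset_refl _) c h

lemma mem_Isp_iff {f : P3} : f ∈ Isp ↔ ∀ m, DD m ∣ coeff m f := by
  constructor
  · exact fun h => Isp_le_MM h
  · intro h
    rw [← support_sum_monomial_coeff f]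
    exact Ideal.sum_mem _ fun m _ => monomial_mem m _ (h m)

noncomputable def tv (i : ℕ) : R3 := Ideal.Quotient.mk Isp (X (Sum.inl i))

noncomputable def xv (p : Nat.Primes) : R3 := Ideal.Quotient.mk Isp (X (Sum.inr p))

lemma xv_ne_zero (p : Nat.Primes) : xv p ≠ 0 := by
  show Ideal.Quotient.mk Isp (X (Sum.inr p) : P3) ≠ (0 : P3 ⧸ Isp)
  rw [ne_eq, Ideal.Quotient.eq_zero_iff_mem, mem_Isp_iff]
  push_neg
  refine ⟨Finsupp.single (Sum.inr p) 1, ?_⟩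
  rw [coeff_X]
  rw [DD, if_neg (by rw [td_single_inr]; omega)]
  have h3 : gg (Finsupp.single (Sum.inr p : Sig) 1) = (p : ℕ) := by
    rw [gg, Finsupp.support_single_ne_zero _ one_ne_zero, Finset.gcd_singleton]
    exact normalize_eq _
  rw [h3]
  intro hdvd
  have h1 : (p : ℕ) ∣ 1 := by rw [if_pos rfl] at hdvd; exact_mod_cast hdvd
  have h2 := Nat.le_of_dvd one_pos h1
  have := p.2.two_le
  omega

lemma p_mul_xv (p : Nat.Primes) : ((p : ℕ) : R3) * xv p = 0 := by
  have h1 : ((p : ℕ) : R3) = Ideal.Quotient.mk Isp (C ((p : ℕ) : ℤ)) := by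
    rw [show (C ((p : ℕ) : ℤ) : P3) = ((p : ℕ) : P3) from map_natCast (C : ℤ →+* P3) (p : ℕ)]
    exact (map_natCast (Ideal.Quotient.mk Isp) (p : ℕ)).symm
  have h2 : Ideal.Quotient.mk Isp (C ((p : ℕ) : ℤ) * X (Sum.inr p)) = 0 :=
    Ideal.Quotient.eq_zero_iff_mem.mpr (Ideal.subset_span (Set.mem_union_right _ ⟨p, rfl⟩))
  rw [map_mul] at h2
  rw [h1, xv]
  exact h2

lemma key {N : ℕ} (b : Fin N → R3)
    (hb : ∑ i : Fin N, tv (i : ℕ) * b i = 0) (i₀ : Fin N) :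
    b i₀ * b i₀ = 0 := by
  classical
  have hsur : ∀ i, ∃ B : P3, Ideal.Quotient.mk Isp B = b i :=
    fun i => Ideal.Quotient.mk_surjective _
  choose B hB using hsur
  have hmem : (∑ i : Fin N, X (Sum.inl (i : ℕ)) * B i) ∈ Isp := by
    rw [← Ideal.Quotient.eq_zero_iff_mem, map_sum]
    simp only [map_mul, hB]
    exact hb
  have H : ∀ v : Sig →₀ ℕ, td v = 0 → (gg v : ℤ) ∣ coeff v (B i₀) := by
    intro v hv
    set m := v + Finsupp.single (Sum.inl (i₀ : ℕ)) 1 with hm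
    have hd := (mem_Isp_iff.mp hmem) m
    have hco : coeff m (∑ i : Fin N, X (Sum.inl (i : ℕ)) * B i) = coeff v (B i₀) := by
      rw [coeff_sum]
      rw [Finset.sum_eq_single i₀]
      · rw [coeff_X_mul']
        rw [if_pos]
        · congr 1
          rw [hm]
          exact add_tsub_cancel_right _ _
        · rw [hm]
          simp [Finsupp.mem_support_iff, Finsupp.add_apply, Finsupp.single_apply]
      · intro i _ hne
        have h0 := td_apply_inl hv (i : ℕ)
        have hne2 : (Sum.inl (i₀ : ℕ) : Sig) ≠ Sum.inl (i : ℕ) := by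
          intro hcon
          exact hne (Fin.ext (by injection hcon)).symm
        rw [coeff_X_mul', if_neg]
        rw [Finsupp.mem_support_iff, not_not, hm, Finsupp.add_apply, h0,
          Finsupp.single_apply, if_neg hne2, add_zero]
      · intro hni
        exact absurd (Finset.mem_univ i₀) hni
    rw [hco] at hd
    have htd : td m = 1 := by rw [hm, td_add, td_single_inl, hv]
    have hgg : gg m = gg v := by
      apply Nat.dvd_antisymm
      · exact gg_dvd support_subset_left
      · refine Finset.dvd_gcd fun s hs => ?_
        by_cases hsv : s ∈ v.support
        · exact Finset.gcd_dvd hsv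
        · have hseq : s = Sum.inl (i₀ : ℕ) := by
            simp only [Finsupp.mem_support_iff, hm, Finsupp.add_apply, not_not] at hs hsv
            rw [hsv, zero_add] at hs
            by_contra hcon
            rw [Finsupp.single_apply, if_neg (fun hx => hcon hx.symm)] at hs
            exact hs rfl
          rw [hseq]
          exact dvd_zero _
    rw [DD, if_neg (by omega), hgg] at hd
    exact hd
  have hsq : (B i₀ * B i₀) ∈ Isp := by
    rw [mem_Isp_iff]
    intro m
    by_cases h2 : 2 ≤ td m
    · rw [DD, if_pos h2]
      exact one_dvd _
    · rw [DD, if_neg h2, coeff_mul]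
      refine Finset.dvd_sum fun uv huv => ?_
      have hsum := Finset.HasAntidiagonal.mem_antidiagonal.mp huv
      have htd2 : td uv.1 + td uv.2 ≤ 1 := by
        have h3 := td_add uv.1 uv.2
        rw [hsum] at h3
        omega
      rcases (by omega : td uv.1 = 0 ∨ td uv.2 = 0) with h4 | h4
      · exact (((Int.natCast_dvd_natCast.mpr (gg_dvd (hsum ▸ support_subset_left))).trans
          (H uv.1 h4))).mul_right _
      · exact (((Int.natCast_dvd_natCast.mpr (gg_dvd (hsum ▸ support_subset_right))).trans
          (H uv.2 h4))).mul_left _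
  have h0 : Ideal.Quotient.mk Isp (B i₀ * B i₀) = 0 := Ideal.Quotient.eq_zero_iff_mem.mpr hsq
  rw [map_mul, hB] at h0
  exact h0

lemma flat_smul_injective {R : Type*} {M : Type*} [CommRing R] [AddCommGroup M] [Module R M]
    [Module.Flat R M] {r : R} (hr : Function.Injective fun x : R => r * x) :
    Function.Injective fun m : M => r • m := by
  have hf : Function.Injective (LinearMap.lsmul R R r) := by
    exact fun x y h => hr (by simpa [LinearMap.lsmul_apply, smul_eq_mul] using h)
  have h2 := Module.Flat.rTensor_preserves_injective_linearMap (M := M) _ hf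
  have h3 : ∀ m : M, (TensorProduct.lid R M) ((LinearMap.rTensor M (LinearMap.lsmul R R r))
      ((TensorProduct.lid R M).symm m)) = r • m := by
    intro m
    simp [TensorProduct.lid_symm_apply, LinearMap.rTensor_tmul, TensorProduct.lid_tmul,
      smul_eq_mul]
  intro m₁ m₂ hm
  simp only at hm
  have h5 : (TensorProduct.lid R M).symm m₁ = (TensorProduct.lid R M).symm m₂ :=
    h2 ((TensorProduct.lid R M).injective (by rw [h3, h3]; exact hm))
  exact (TensorProduct.lid R M).symm.injective h5

end Stmt14

set_option maxHeartbeats 1000000 in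
set_option synthInstance.maxHeartbeats 400000 in
/-- The ring `R₃` has neither property (*) nor property (**): there is no flat ring
homomorphism from `R₃` to any nontrivial Noetherian ring, and no flat ring homomorphism from
any nontrivial Noetherian ring to `R₃`. -/
theorem stmt14 :
    (∀ (S : Type u) [CommRing S], Nontrivial S → IsNoetherianRing S →
        ∀ φ : R3 →+* S, ¬ φ.Flat) ∧
      (∀ (S : Type u) [CommRing S], Nontrivial S → IsNoetherianRing S →
        ∀ φ : S →+* R3, ¬ φ.Flat) := by
  constructor
  · -- property (*)
    intro S _ hS hN φ hφ
    letI : Algebra R3 S := φ.toAlgebra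
    haveI hfl : Module.Flat R3 S := hφ
    -- stabilization of the chain of ideals generated by images of the t's
    let F : ℕ →o Ideal S :=
      ⟨fun n => Ideal.span (Set.range fun i : Fin (n + 1) => φ (Stmt14.tv (i : ℕ))),
        by
          intro n m hnm
          apply Ideal.span_mono
          rintro _ ⟨i, rfl⟩
          exact ⟨⟨(i : ℕ), by omega⟩, rfl⟩⟩
    obtain ⟨n, hstab⟩ :=
      (monotone_stabilizes_iff_noetherian.mpr (isNoetherianRing_iff.mp hN)) F
    have hmem : φ (Stmt14.tv (n + 1))
        ∈ Ideal.span (Set.range fun i : Fin (n + 1) => φ (Stmt14.tv (i : ℕ))) := by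
      have h2 : φ (Stmt14.tv (n + 1)) ∈ F (n + 1) :=
        Ideal.subset_span ⟨Fin.last (n + 1), rfl⟩
      rw [← hstab (n + 1) (Nat.le_succ n)] at h2
      exact h2
    obtain ⟨c, hc⟩ := (Submodule.mem_span_range_iff_exists_fun S).mp hmem
    -- pass to the universe-lifted base ring
    set e : ULift.{u} R3 ≃+* R3 := ULift.ringEquiv with he
    letI : Algebra (ULift.{u} R3) R3 := e.toRingHom.toAlgebra
    letI : Algebra (ULift.{u} R3) S := (φ.comp e.toRingHom).toAlgebra
    haveI : IsScalarTower (ULift.{u} R3) R3 S := by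
      refine IsScalarTower.of_algebraMap_eq' (R := ULift.{u} R3) (S := R3) (A := S) ?_
      rfl
    haveI : Module.Flat (ULift.{u} R3) R3 := by
      refine Module.Flat.of_linearEquiv
        ({ toFun := e.symm, invFun := e,
           left_inv := fun x => e.apply_symm_apply x,
           right_inv := fun x => e.symm_apply_apply x,
           map_add' := fun x y => map_add _ _ _,
           map_smul' := fun a x => by
             show e.symm (e a * x) = a * e.symm x
             rw [map_mul, RingEquiv.symm_apply_apply] } : R3 ≃ₗ[ULift.{u} R3] ULift.{u} R3)
    haveI : Module.Flat (ULift.{u} R3) S := @Module.Flat.trans (ULift.{u} R3) R3 S _ _ _ _ Algebra.toModule Algebra.toModule ‹_› ‹_› _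
    letI : SMul (ULift.{u} R3) S := Algebra.toSMul
    have hsm : ∀ (r : R3) (s : S), (e.symm r) • s = φ r * s := by
      intro r s
      show φ (e (e.symm r)) * s = φ r * s
      rw [RingEquiv.apply_symm_apply]
    have hrel : ∑ i : ULift.{u} (Fin (n + 2)),
        (e.symm (Stmt14.tv (i.down : ℕ))) • ((Fin.snoc c (-1 : S) : Fin (n + 2) → S) i.down)
          = 0 := by
      have hswap : ∑ i : ULift.{u} (Fin (n + 2)),
          (e.symm (Stmt14.tv (i.down : ℕ))) • ((Fin.snoc c (-1 : S) : Fin (n + 2) → S) i.down)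
          = ∑ i' : Fin (n + 2),
            (e.symm (Stmt14.tv (i' : ℕ))) • ((Fin.snoc c (-1 : S) : Fin (n + 2) → S) i') :=
        Fintype.sum_equiv Equiv.ulift _ _ (fun i => rfl)
      rw [hswap]
      simp only [hsm]
      rw [Fin.sum_univ_castSucc]
      simp only [Fin.snoc_castSucc, Fin.snoc_last, Fin.coe_castSucc, Fin.val_last]
      have h6 : ∑ i : Fin (n + 1), φ (Stmt14.tv (i : ℕ)) * c i = φ (Stmt14.tv (n + 1)) := by
        rw [← hc]
        exact Finset.sum_congr rfl fun i _ => mul_comm _ _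
      rw [h6]
      ring
    obtain ⟨κ, a, y, hay, ha⟩ :=
      Module.Flat.isTrivialRelation_of_sum_smul_eq_zero (R := ULift.{u} R3) (M := S)
        (ι := ULift.{u} (Fin (n + 2)))
        (f := fun i => e.symm (Stmt14.tv (i.down : ℕ)))
        (x := fun i => (Fin.snoc c (-1 : S) : Fin (n + 2) → S) i.down)
        (by exact hrel)
    have hbj : ∀ j, ∑ i' : Fin (n + 2),
        Stmt14.tv (i' : ℕ) * e (a (ULift.up i') j) = 0 := by
      intro j
      have h7 := congrArg e (ha j)
      rw [map_sum, map_zero] at h7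
      rw [← h7]
      refine (Fintype.sum_equiv (Equiv.ulift) _ _ ?_).symm
      intro i
      rw [map_mul, RingEquiv.apply_symm_apply]
      rfl
    have hsq : ∀ j, e (a (ULift.up (Fin.last (n + 1))) j)
        * e (a (ULift.up (Fin.last (n + 1))) j) = 0 :=
      fun j => Stmt14.key (fun i' => e (a (ULift.up i') j)) (hbj j) (Fin.last (n + 1))
    have hone : (1 : S) = ∑ j, φ (e (a (ULift.up (Fin.last (n + 1))) j)) * (- y j) := by
      have h8 := hay (ULift.up (Fin.last (n + 1)))
      simp only [ULift.down_up, Fin.snoc_last] at h8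
      have h9 : ∀ (A : ULift.{u} R3) (s : S), A • s = φ (e A) * s := fun A s => rfl
      change (-1 : S) = ∑ j, φ (e (a (ULift.up (Fin.last (n + 1))) j)) * y j at h8
      have h10 := congrArg Neg.neg h8
      rw [neg_neg, ← Finset.sum_neg_distrib] at h10
      simpa only [mul_neg] using h10
    have hnil : IsNilpotent (1 : S) := by
      rw [hone]
      refine isNilpotent_sum fun j _ => ⟨2, ?_⟩
      have h11 : φ (e (a (ULift.up (Fin.last (n + 1))) j))
          * φ (e (a (ULift.up (Fin.last (n + 1))) j)) = 0 := by
        rw [← map_mul, hsq j, map_zero]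
      calc (φ (e (a (ULift.up (Fin.last (n + 1))) j)) * (- y j)) ^ 2
          = (φ (e (a (ULift.up (Fin.last (n + 1))) j))
              * φ (e (a (ULift.up (Fin.last (n + 1))) j))) * (y j * y j) := by ring
        _ = 0 := by rw [h11, zero_mul]
    obtain ⟨k, hk⟩ := hnil
    rw [one_pow] at hk
    exact one_ne_zero hk
  · -- property (**)
    intro S _ hS hN φ hφ
    letI : Algebra S R3 := φ.toAlgebra
    haveI hfl : Module.Flat S R3 := hφ
    -- every rational prime is a zero divisor in S
    have hzd : ∀ p : Nat.Primes, ∃ s : S, s ≠ 0 ∧ ((p : ℕ) : S) * s = 0 := by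
      intro p
      by_contra hcon
      push_neg at hcon
      have hinj : Function.Injective fun x : S => ((p : ℕ) : S) * x := by
        intro x y hxy
        simp only at hxy
        by_contra hne
        have := hcon (x - y) (sub_ne_zero_of_ne hne)
        rw [mul_sub, hxy, sub_self] at this
        exact this rfl
      have hinj2 := Stmt14.flat_smul_injective (M := R3) hinj
      have h0 : (((p : ℕ) : S)) • Stmt14.xv p = (((p : ℕ) : S)) • (0 : R3) := by
        have hsd : (((p : ℕ) : S)) • Stmt14.xv p = ((p : ℕ) : R3) * Stmt14.xv p := by
          show φ (((p : ℕ) : S)) * Stmt14.xv p = ((p : ℕ) : R3) * Stmt14.xv p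
          rw [map_natCast]
        rw [hsd, Stmt14.p_mul_xv p]
        show (0 : R3) = φ (((p : ℕ) : S)) * 0
        rw [mul_zero]
      exact Stmt14.xv_ne_zero p (hinj2 h0)
    -- the chain of annihilators of products of primes
    let F : ℕ →o Ideal S :=
      ⟨fun n => LinearMap.ker (LinearMap.lsmul S S
          (((∏ i ∈ Finset.range n, Nat.nth Nat.Prime i : ℕ) : S))),
        by
          intro n m hnm s hs
          simp only [LinearMap.mem_ker, LinearMap.lsmul_apply, smul_eq_mul] at *
          obtain ⟨k, hk⟩ := Finset.prod_dvd_prod_of_subset _ _ (fun i => Nat.nth Nat.Prime i)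
            (Finset.range_subset_range.mpr hnm)
          rw [hk, Nat.cast_mul,
            mul_comm (((∏ i ∈ Finset.range n, Nat.nth Nat.Prime i : ℕ) : S)) ((k : ℕ) : S),
            mul_assoc, hs, mul_zero]⟩
    obtain ⟨n₀, hstab⟩ :=
      (monotone_stabilizes_iff_noetherian.mpr (isNoetherianRing_iff.mp hN)) F
    set p : ℕ := Nat.nth Nat.Prime n₀ with hp
    have hpp : p.Prime := Nat.prime_nth_prime n₀
    obtain ⟨s, hs0, hps⟩ := hzd ⟨p, hpp⟩
    have hps' : ((p : ℕ) : S) * s = 0 := hps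
    have h1 : s ∈ LinearMap.ker (LinearMap.lsmul S S
        (((∏ i ∈ Finset.range (n₀ + 1), Nat.nth Nat.Prime i : ℕ) : S))) := by
      simp only [LinearMap.mem_ker, LinearMap.lsmul_apply, smul_eq_mul]
      rw [Finset.prod_range_succ, Nat.cast_mul, mul_assoc, hps', mul_zero]
    have h1' : s ∈ F (n₀ + 1) := h1
    rw [← hstab (n₀ + 1) (Nat.le_succ n₀)] at h1'
    have h1'' : ((∏ i ∈ Finset.range n₀, Nat.nth Nat.Prime i : ℕ) : S) * s = 0 := by
      have h2 : s ∈ LinearMap.ker (LinearMap.lsmul S S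
          (((∏ i ∈ Finset.range n₀, Nat.nth Nat.Prime i : ℕ) : S))) := h1'
      simpa only [LinearMap.mem_ker, LinearMap.lsmul_apply, smul_eq_mul] using h2
    -- p is coprime to the product of the earlier primes
    have hcop : Nat.Coprime p (∏ i ∈ Finset.range n₀, Nat.nth Nat.Prime i) := by
      rw [Nat.Prime.coprime_iff_not_dvd hpp]
      intro hdvd
      obtain ⟨i, hi, hdiv⟩ := hpp.prime.exists_mem_finset_dvd hdvd
      rw [Finset.mem_range] at hi
      have heq : p = Nat.nth Nat.Prime i :=
        (Nat.prime_dvd_prime_iff_eq hpp (Nat.prime_nth_prime i)).mp hdiv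
      have hlt := (Nat.nth_strictMono Nat.infinite_setOf_prime) hi
      rw [hp] at heq
      exact absurd heq (Nat.ne_of_gt hlt)
    -- Bezout
    have hbez := Nat.gcd_eq_gcd_ab p (∏ i ∈ Finset.range n₀, Nat.nth Nat.Prime i)
    rw [Nat.Coprime] at hcop
    rw [hcop] at hbez
    have hfinal : s = 0 := by
      have h := congrArg (fun z : ℤ => (z : S) * s) hbez
      simp only [Int.cast_add, Int.cast_mul, Int.cast_natCast, Nat.cast_one, Int.cast_one,
        one_mul] at h
      rw [h]
      have hring : (((p : ℕ) : S)
              * ((Nat.gcdA p (∏ i ∈ Finset.range n₀, Nat.nth Nat.Prime i) : ℤ) : S)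
            + ((∏ i ∈ Finset.range n₀, Nat.nth Nat.Prime i : ℕ) : S)
              * ((Nat.gcdB p (∏ i ∈ Finset.range n₀, Nat.nth Nat.Prime i) : ℤ) : S)) * s
          = ((Nat.gcdA p (∏ i ∈ Finset.range n₀, Nat.nth Nat.Prime i) : ℤ) : S)
              * (((p : ℕ) : S) * s)
            + ((Nat.gcdB p (∏ i ∈ Finset.range n₀, Nat.nth Nat.Prime i) : ℤ) : S)
              * (((∏ i ∈ Finset.range n₀, Nat.nth Nat.Prime i : ℕ) : S) * s) := by
        ring
      rw [hring, hps', h1'', mul_zero, mul_zero, add_zero]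
    exact hs0 hfinal
end

section
/- Let (R, m) be a square zero extension of ℤ/2ℤ. Then the following are equivalent: (1) R has property (*), i.e. there exist a nontrivial Noetherian ring S and a flat ring homomorphism R → S; (2) R is Noetherian; (3) R is a finite ring. Moreover, if these hold, then the cardinality of R equals 2^{n+1}, where n is the minimal number of generators of m as an R-module. -/
universe u

section Aux

variable {R : Type u} [CommRing R]

private lemma aux_cases (m : Ideal R) (hcard : Nat.card (R ⧸ m) = 2) (r : R) :
    r ∈ m ∨ r - 1 ∈ m := by
  haveI : Finite (R ⧸ m) := Nat.finite_of_card_ne_zero (by omega)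
  haveI h0 : Nontrivial (R ⧸ m) := Finite.one_lt_card_iff_nontrivial.mp (by omega)
  obtain ⟨b, hb, hb'⟩ := (Nat.card_eq_two_iff' (0 : R ⧸ m)).mp hcard
  by_cases h : Ideal.Quotient.mk m r = 0
  · exact Or.inl (Ideal.Quotient.eq_zero_iff_mem.mp h)
  · right
    have h1 : Ideal.Quotient.mk m r = b := hb' _ h
    have h2 : (1 : R ⧸ m) = b := hb' _ one_ne_zero
    have h3 : Ideal.Quotient.mk m r = Ideal.Quotient.mk m 1 := by
      rw [map_one, h1, h2]
    exact Ideal.Quotient.eq.mp h3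

private lemma aux_mul (m : Ideal R) (hm2 : m ^ 2 = ⊥) (hcard : Nat.card (R ⧸ m) = 2)
    {x : R} (hx : x ∈ m) (r : R) : r * x = 0 ∨ r * x = x := by
  rcases aux_cases m hcard r with h | h
  · left
    have h2 : r * x ∈ m ^ 2 := by rw [pow_two]; exact Ideal.mul_mem_mul h hx
    rw [hm2] at h2
    exact (Submodule.mem_bot R).mp h2
  · right
    have h2 : (r - 1) * x ∈ m ^ 2 := by rw [pow_two]; exact Ideal.mul_mem_mul h hx
    rw [hm2] at h2
    have h3 : (r - 1) * x = 0 := (Submodule.mem_bot R).mp h2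
    linear_combination h3

private lemma aux_unit (m : Ideal R) (hm2 : m ^ 2 = ⊥) (hcard : Nat.card (R ⧸ m) = 2)
    {r : R} (hr : r ∉ m) : IsUnit r := by
  rcases aux_cases m hcard r with h | h
  · exact absurd h hr
  · refine IsUnit.of_mul_eq_one (a := r) (2 - r) ?_
    have h2 : (r - 1) * (r - 1) ∈ m ^ 2 := by rw [pow_two]; exact Ideal.mul_mem_mul h h
    rw [hm2] at h2
    have h3 : (r - 1) * (r - 1) = 0 := (Submodule.mem_bot R).mp h2
    linear_combination -h3

private lemma aux_span (m : Ideal R) (hm2 : m ^ 2 = ⊥) (hcard : Nat.card (R ⧸ m) = 2)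
    {s : Set R} (hs : s ⊆ m) (x : R) :
    x ∈ Ideal.span s ↔ x ∈ AddSubgroup.closure s := by
  constructor
  · intro hx
    let I : Ideal R :=
      { carrier := AddSubgroup.closure s
        add_mem' := fun ha hb => add_mem ha hb
        zero_mem' := zero_mem _
        smul_mem' := by
          intro r y hy
          have hym : y ∈ m :=
            ((AddSubgroup.closure_le m.toAddSubgroup).mpr hs) hy
          rcases aux_mul m hm2 hcard hym r with h | h
          · show r • y ∈ AddSubgroup.closure s
            rw [smul_eq_mul, h]
            exact zero_mem _
          · show r • y ∈ AddSubgroup.closure s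
            rw [smul_eq_mul, h]
            exact hy }
    have hsI : s ⊆ I := fun y hy => AddSubgroup.subset_closure hy
    exact Ideal.span_le.mpr hsI hx
  · intro hx
    exact (AddSubgroup.closure_le (Ideal.span s).toAddSubgroup).mpr
      (fun y hy => Ideal.subset_span hy) hx

private lemma aux_two_smul (m : Ideal R) (hm2 : m ^ 2 = ⊥) (hcard : Nat.card (R ⧸ m) = 2)
    (x : ↥m) : 2 • x = 0 := by
  rcases aux_mul m hm2 hcard x.2 (2 : R) with h | h
  · ext
    push_cast
    rw [two_smul]
    have : (2 : R) * (x : R) = (x : R) + (x : R) := by ring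
    rw [← this, h]
  · have hx0 : (x : R) = 0 := by linear_combination h
    ext
    push_cast
    rw [two_smul, hx0, add_zero]

private lemma span_zmod2_eq_closure {G : Type*} [AddCommGroup G] [Module (ZMod 2) G]
    (t : Set G) (x : G) :
    x ∈ Submodule.span (ZMod 2) t ↔ x ∈ AddSubgroup.closure t := by
  have hc : ∀ c : ZMod 2, c = 0 ∨ c = 1 := by decide
  constructor
  · intro hx
    let p : Submodule (ZMod 2) G :=
      { carrier := AddSubgroup.closure t
        add_mem' := fun ha hb => add_mem ha hb
        zero_mem' := zero_mem _
        smul_mem' := by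
          intro c y hy
          rcases hc c with rfl | rfl
          · show (0 : ZMod 2) • y ∈ AddSubgroup.closure t
            rw [zero_smul]; exact zero_mem _
          · show (1 : ZMod 2) • y ∈ AddSubgroup.closure t
            rw [one_smul]; exact hy }
    have htp : t ⊆ p := fun y hy => AddSubgroup.subset_closure hy
    exact Submodule.span_le.mpr htp hx
  · intro hx
    exact (AddSubgroup.closure_le (Submodule.span (ZMod 2) t).toAddSubgroup).mpr
      (fun y hy => Submodule.subset_span hy) hx

/-- Pulling back additive closure along the inclusion of `m`. -/
private lemma aux_pullback (m : Ideal R) {s : Finset R} (hsub : (↑s : Set R) ⊆ m)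
    (x : ↥m) (hx : (x : R) ∈ AddSubgroup.closure (↑s : Set R)) :
    x ∈ AddSubgroup.closure ((fun y : ↥m => (y : R)) ⁻¹' ↑s) := by
  have himg : m.toAddSubgroup.subtype '' ((fun y : ↥m => (y : R)) ⁻¹' ↑s) = ↑s := by
    ext y
    constructor
    · rintro ⟨z, hz, rfl⟩; exact hz
    · intro hy; exact ⟨⟨y, hsub hy⟩, hy, rfl⟩
  have hmap : (AddSubgroup.closure ((fun y : ↥m => (y : R)) ⁻¹' ↑s)).map
      m.toAddSubgroup.subtype = AddSubgroup.closure (↑s : Set R) := by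
    rw [AddMonoidHom.map_closure, himg]
  rw [← hmap] at hx
  obtain ⟨z, hz, hzx⟩ := hx
  have : z = x := Subtype.ext hzx
  rwa [← this]

/-- If a finite set generates `m` as an ideal, then its preimage spans `m` over `ZMod 2`. -/
private lemma aux_span_top (m : Ideal R) (hm2 : m ^ 2 = ⊥) (hcard : Nat.card (R ⧸ m) = 2)
    [Module (ZMod 2) ↥m] {s : Finset R} (hspan : Ideal.span (↑s : Set R) = m) :
    Submodule.span (ZMod 2) ((fun y : ↥m => (y : R)) ⁻¹' ↑s) = ⊤ := by
  have hsub : (↑s : Set R) ⊆ m := hspan ▸ Ideal.subset_span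
  rw [eq_top_iff]
  intro x _
  rw [span_zmod2_eq_closure]
  apply aux_pullback m hsub
  exact (aux_span m hm2 hcard hsub _).mp (hspan ▸ x.2)

/-- `m` finitely generated implies `R` finite. -/
private lemma aux_finite (m : Ideal R) (hm2 : m ^ 2 = ⊥) (hcard : Nat.card (R ⧸ m) = 2)
    (hfg : m.FG) : Finite R := by
  letI : Module (ZMod 2) ↥m := AddCommGroup.zmodModule (aux_two_smul m hm2 hcard)
  obtain ⟨s, hs⟩ := hfg
  have hsub : (↑s : Set R) ⊆ m := hs ▸ Ideal.subset_span
  have hfin : ((fun y : ↥m => (y : R)) ⁻¹' ↑s).Finite :=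
    s.finite_toSet.preimage (Subtype.val_injective.injOn)
  haveI : Module.Finite (ZMod 2) ↥m := by
    refine ⟨⟨hfin.toFinset, ?_⟩⟩
    rw [hfin.coe_toFinset]
    exact aux_span_top m hm2 hcard hs
  haveI : Finite ↥m := Module.finite_of_finite (ZMod 2)
  haveI : Finite ↥m.toAddSubgroup := ‹Finite ↥m›
  haveI : Finite (R ⧸ m) := Nat.finite_of_card_ne_zero (by omega)
  haveI : Finite (R ⧸ m.toAddSubgroup) := ‹Finite (R ⧸ m)›
  exact Finite.of_addSubgroup_quotient m.toAddSubgroup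

end Aux

set_option maxHeartbeats 1000000 in
/-- Let `(R, m)` be a square zero extension of `ℤ/2ℤ`, i.e. `m² = 0` and `R/m` has exactly
two elements. Then TFAE: (1) `R` has property (*), i.e. there is a flat ring map from `R` to
a nontrivial Noetherian ring; (2) `R` is Noetherian; (3) `R` is finite. Moreover, in that case
`|R| = 2^(n+1)` where `n` is the minimal number of generators of `m`. -/
theorem stmt18 {R : Type u} [CommRing R] [Nontrivial R] (m : Ideal R)
    (hm2 : m ^ 2 = ⊥) (hcard : Nat.card (R ⧸ m) = 2) :
    List.TFAE
      [∃ (S : Type u) (_ : CommRing S), Nontrivial S ∧ IsNoetherianRing S ∧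
          ∃ φ : R →+* S, φ.Flat,
        IsNoetherianRing R,
        Finite R] ∧
      (Finite R →
        Nat.card R =
          2 ^ (sInf {k : ℕ | ∃ s : Finset R, s.card = k ∧ Ideal.span (s : Set R) = m} + 1)) := by
  classical
  constructor
  · tfae_have 3 → 2 := by
      intro h
      exact isNoetherianRing_iff.mpr inferInstance
    tfae_have 2 → 1 := by
      intro h
      exact ⟨R, ‹_›, ‹_›, h, 1, RingHom.Flat.id R⟩
    tfae_have 1 → 3 := by
      rintro ⟨S, _, hSnt, hSnoeth, φ, hφ⟩
      letI : Algebra R S := φ.toAlgebra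
      haveI : Module.Flat R S := hφ
      have hsmul : ∀ (r : R) (z : S), r • z = φ r * z := fun r z => rfl
      -- the ideal `mS` is finitely generated
      have hJ : (Ideal.map φ m).FG := (isNoetherianRing_iff.mp hSnoeth).noetherian _
      obtain ⟨u, hu⟩ := hJ
      have hmap : Ideal.map φ m = Ideal.span (φ '' (m : Set R)) := rfl
      have husub : (↑u : Set S) ⊆ Ideal.span (φ '' (m : Set R)) := by
        rw [← hmap, ← hu]; exact Ideal.subset_span
      choose F hF1 hF2 using fun (b : S) (hb : b ∈ u) =>
        Submodule.mem_span_finite_of_mem_span (husub hb)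
      let V : Finset S := u.attach.biUnion (fun b => F b.1 b.2)
      have hVsub : (↑V : Set S) ⊆ φ '' (m : Set R) := by
        intro y hy
        simp only [V, Finset.mem_coe, Finset.mem_biUnion, Finset.mem_attach, true_and] at hy
        obtain ⟨b, hyb⟩ := hy
        exact hF1 b.1 b.2 hyb
      have hVspan : Ideal.span (↑V : Set S) = Ideal.map φ m := by
        apply le_antisymm
        · rw [hmap]
          exact Ideal.span_le.mpr (fun y hy => Ideal.subset_span (hVsub hy))
        · rw [← hu]
          apply Ideal.span_le.mpr
          intro b hb
          refine Submodule.span_mono (t := (↑V : Set S)) ?_ (hF2 b hb)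
          intro y hy
          simp only [V, Finset.coe_biUnion, Finset.mem_coe, Finset.mem_attach,
            Set.mem_iUnion, Set.iUnion_true]
          exact ⟨⟨b, hb⟩, hy⟩
      choose g hg1 hg2 using fun (y : S) (hy : y ∈ V) => hVsub hy
      let wf : Finset R := V.attach.image (fun y => g y.1 y.2)
      have hwfm : (↑wf : Set R) ⊆ m := by
        intro a ha
        simp only [wf, Finset.coe_image, Set.mem_image, Finset.mem_coe, Finset.mem_attach,
          true_and] at ha
        obtain ⟨y, rfl⟩ := ha
        exact hg1 y.1 y.2
      set I : Ideal R := Ideal.span (↑wf : Set R) with hI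
      have hIm : I ≤ m := Ideal.span_le.mpr hwfm
      -- main claim : I = m
      have hImain : I = m := by
        by_contra hne
        obtain ⟨x, hxm, hxI⟩ := SetLike.exists_of_lt (lt_of_le_of_ne hIm hne)
        have hxV : φ x ∈ Ideal.span (↑V : Set S) := by
          rw [hVspan]; exact Ideal.mem_map_of_mem φ hxm
        obtain ⟨c, -, hc⟩ := Submodule.mem_span_finset.mp hxV
        -- build the relation
        let f : Option ↥V → R := fun o => o.elim x (fun i => g i.1 i.2)
        let z : Option ↥V → S := fun o => o.elim (-1) (fun i => c i.1)
        have hrel : ∑ o, f o • z o = 0 := by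
          rw [Fintype.sum_option]
          have h1 : (f none • z none : S) = -(φ x) := by
            simp only [f, z, Option.elim, hsmul, mul_neg_one]
          have h2 : ∀ i : ↥V, f (some i) • z (some i) = c i.1 • (i.1 : S) := by
            intro i
            simp only [f, z, Option.elim, hsmul, hg2 i.1 i.2, smul_eq_mul]
            ring
          rw [h1]
          rw [Finset.sum_congr rfl (fun i _ => h2 i)]
          have h3 : ∑ i : ↥V, c i.1 • (i.1 : S) = ∑ i ∈ V, c i • i := by
            rw [Finset.univ_eq_attach]
            exact Finset.sum_attach V (fun i => c i • i)
          rw [h3, hc]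
          ring
        obtain ⟨κ, A, zz, hA1, hA2⟩ :=
          Module.Flat.isTrivialRelation_of_sum_smul_eq_zero (R := R) (M := S) (f := f) (x := z) hrel
        -- each A none j lies in m
        have hAm : ∀ j, A none j ∈ m := by
          intro j
          by_contra hAj
          have hu : IsUnit (A none j) := aux_unit m hm2 hcard hAj
          have h2 := hA2 j
          rw [Fintype.sum_option] at h2
          have hsumI : ∑ i : ↥V, f (some i) * A (some i) j ∈ I := by
            apply Ideal.sum_mem
            intro i _
            apply Ideal.mul_mem_right
            apply Ideal.subset_span
            simp only [f, Option.elim, wf, Finset.coe_image, Set.mem_image, Finset.mem_coe]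
            exact ⟨i, Finset.mem_attach _ _, rfl⟩
          have hxA : x * A none j ∈ I := by
            have : f none * A none j = -(∑ i : ↥V, f (some i) * A (some i) j) := by
              linear_combination h2
            simp only [f, Option.elim] at this
            rw [this]
            exact neg_mem hsumI
          obtain ⟨v, hv⟩ := hu.exists_right_inv
          have : x = x * A none j * v := by
            rw [mul_assoc, hv, mul_one]
          exact hxI (this ▸ Ideal.mul_mem_right v I hxA)
        -- conclude : -1 is nilpotent
        have hnil : (-1 : S) ∈ nilradical S := by
          have h1 := hA1 none
          simp only [z, Option.elim] at h1
          rw [h1]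
          apply Ideal.sum_mem
          intro j _
          rw [hsmul]
          apply Ideal.mul_mem_right
          rw [mem_nilradical]
          refine ⟨2, ?_⟩
          rw [← map_pow, pow_two]
          have : A none j * A none j ∈ m ^ 2 := by
            rw [pow_two]; exact Ideal.mul_mem_mul (hAm j) (hAm j)
          rw [hm2] at this
          rw [(Submodule.mem_bot R).mp this, map_zero]
        have hnil1 : (1 : S) ∈ nilradical S := by
          have := neg_mem hnil
          rwa [neg_neg] at this
        obtain ⟨k, hk⟩ := mem_nilradical.mp hnil1
        rw [one_pow] at hk
        exact one_ne_zero hk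
      exact aux_finite m hm2 hcard ⟨wf, hImain ▸ rfl⟩
    tfae_finish
  · intro hfin
    letI : Module (ZMod 2) ↥m := AddCommGroup.zmodModule (aux_two_smul m hm2 hcard)
    haveI : Finite ↥m := Subtype.finite
    haveI : Module.Finite (ZMod 2) ↥m := Module.Finite.of_finite
    set d := Module.finrank (ZMod 2) ↥m with hd
    set Ks : Set ℕ := {k : ℕ | ∃ s : Finset R, s.card = k ∧ Ideal.span (s : Set R) = m}
      with hKs
    -- membership : there is a generating set of size d
    have hmem : d ∈ Ks := by
      let b := Module.finBasis (ZMod 2) ↥m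
      let s₀ : Finset R := Finset.univ.image (fun i => ((b i : ↥m) : R))
      have hinj : Function.Injective (fun i => ((b i : ↥m) : R)) :=
        Subtype.val_injective.comp b.injective
      have hcard₀ : s₀.card = d := by
        rw [Finset.card_image_of_injective _ hinj, Finset.card_univ, Fintype.card_fin]
      have hsub : (↑s₀ : Set R) ⊆ m := by
        intro y hy
        simp only [s₀, Finset.coe_image, Finset.coe_univ, Set.image_univ, Set.mem_range] at hy
        obtain ⟨i, rfl⟩ := hy
        exact (b i).2
      have hspan₀ : Ideal.span (↑s₀ : Set R) = m := by
        apply le_antisymm (Ideal.span_le.mpr hsub)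
        intro x hx
        rw [aux_span m hm2 hcard hsub]
        have h1 : (⟨x, hx⟩ : ↥m) ∈ Submodule.span (ZMod 2) (Set.range b) := by
          rw [b.span_eq]; trivial
        have h2 : (⟨x, hx⟩ : ↥m) ∈ AddSubgroup.closure (Set.range b) :=
          (span_zmod2_eq_closure _ _).mp h1
        have h3 := AddSubgroup.mem_map_of_mem m.toAddSubgroup.subtype h2
        rw [AddMonoidHom.map_closure] at h3
        have himg : m.toAddSubgroup.subtype '' Set.range b = ↑s₀ := by
          ext y
          simp only [s₀, Set.mem_image, Set.mem_range, Finset.coe_image, Finset.coe_univ,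
            Set.image_univ]
          constructor
          · rintro ⟨z, ⟨i, rfl⟩, rfl⟩; exact ⟨i, rfl⟩
          · rintro ⟨i, rfl⟩; exact ⟨b i, ⟨i, rfl⟩, rfl⟩
        rwa [himg] at h3
      exact ⟨s₀, hcard₀, hspan₀⟩
    -- lower bound : any generating set has size at least d
    have hlb : ∀ k ∈ Ks, d ≤ k := by
      rintro k ⟨s, hcardk, hspan⟩
      have hsub : (↑s : Set R) ⊆ m := hspan ▸ Ideal.subset_span
      set t : Set ↥m := (fun y : ↥m => (y : R)) ⁻¹' ↑s with ht
      have hspan2 : Submodule.span (ZMod 2) t = ⊤ := aux_span_top m hm2 hcard hspan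
      haveI : Fintype t := Fintype.ofFinite t
      have h1 : d = Module.finrank (ZMod 2) (⊤ : Submodule (ZMod 2) ↥m) := by
        rw [finrank_top]
      have h2 : d ≤ t.toFinset.card := by
        rw [h1, ← hspan2]
        exact finrank_span_le_card t
      refine h2.trans ?_
      rw [← hcardk]
      apply Finset.card_le_card_of_injOn (fun y : ↥m => (y : R))
      · intro y hy
        rw [Finset.mem_coe, Set.mem_toFinset] at hy
        exact hy
      · exact Subtype.val_injective.injOn
    have hinf : sInf Ks = d :=
      le_antisymm (Nat.sInf_le hmem) (hlb _ (Nat.sInf_mem ⟨d, hmem⟩))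
    rw [hinf]
    -- counting
    haveI : Finite ↥m.toAddSubgroup := ‹Finite ↥m›
    have h1 : Nat.card R = Nat.card (R ⧸ m) * Nat.card ↥m :=
      AddSubgroup.card_eq_card_quotient_mul_card_addSubgroup m.toAddSubgroup
    have h2 : Nat.card ↥m = 2 ^ d := by
      letI : Fintype ↥m := Fintype.ofFinite _
      rw [Nat.card_eq_fintype_card, Module.card_eq_pow_finrank (K := ZMod 2) (V := ↥m), ZMod.card]
    rw [h1, hcard, h2, pow_succ]
    ring
end

section
/- Let (R, m) be a square zero extension of ℤ/2ℤ. Then R has property (**) — i.e. there exist a nontrivial Noetherian ring S and a flat ring homomorphism S → R — if and only if the characteristic of R equals 2 or R is Noetherian. -/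
universe u

open TensorProduct

/-- Let `(R, m)` be a square zero extension of `ℤ/2ℤ`, i.e. `m² = 0` and `R/m` has exactly
two elements. Then `R` has property (**) — there exist a nontrivial Noetherian ring `S` and a
flat ring homomorphism `S → R` — iff `char R = 2` or `R` is Noetherian. -/
theorem stmt19 {R : Type u} [CommRing R] [Nontrivial R] (m : Ideal R)
    (hm2 : m ^ 2 = ⊥) (hcard : Nat.card (R ⧸ m) = 2) :
    (∃ (S : Type u) (_ : CommRing S), Nontrivial S ∧ IsNoetherianRing S ∧
        ∃ φ : S →+* R, φ.Flat) ↔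
      ringChar R = 2 ∨ IsNoetherianRing R := by
  classical
  -- Basic facts about the quotient R/m
  have hfin : Finite (R ⧸ m) := Nat.finite_of_card_ne_zero (by omega)
  have hnt : Nontrivial (R ⧸ m) := Finite.one_lt_card_iff_nontrivial.mp (by omega)
  have hdi : ∀ a : R ⧸ m, a = 0 ∨ a = 1 := by
    intro a
    by_contra h
    push_neg at h
    letI := Fintype.ofFinite (R ⧸ m)
    have h01 : (0 : R ⧸ m) ≠ 1 := zero_ne_one
    have h3 : ({0, 1, a} : Finset (R ⧸ m)).card = 3 := by
      rw [Finset.card_insert_of_notMem (by simp [h01, Ne.symm h.1]),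
        Finset.card_insert_of_notMem (by simp [Ne.symm h.2]), Finset.card_singleton]
    have hle : ({0, 1, a} : Finset (R ⧸ m)).card ≤ Fintype.card (R ⧸ m) :=
      Finset.card_le_univ _
    rw [h3, ← Nat.card_eq_fintype_card, hcard] at hle
    omega
  -- the dichotomy in R
  have hdir : ∀ x : R, x ∈ m ∨ x - 1 ∈ m := by
    intro x
    rcases hdi (Ideal.Quotient.mk m x) with h | h
    · exact Or.inl (Ideal.Quotient.eq_zero_iff_mem.mp h)
    · right
      rw [← Ideal.Quotient.eq_zero_iff_mem, map_sub, h, map_one, sub_self]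
  -- 2 ∈ m
  have h2m : (2 : R) ∈ m := by
    rcases hdir 2 with h | h
    · exact h
    · exfalso
      have h1 : (1 : R) ∈ m := by
        have h21 : (2 : R) - 1 = 1 := by ring
        rwa [h21] at h
      have : (1 : R ⧸ m) = 0 := by
        rw [← map_one (Ideal.Quotient.mk m)]
        exact Ideal.Quotient.eq_zero_iff_mem.mpr h1
      exact one_ne_zero this
  -- products in m vanish
  have hmul : ∀ x ∈ m, ∀ y ∈ m, x * y = 0 := by
    intro x hx y hy
    have : x * y ∈ m ^ 2 := by rw [pow_two]; exact Ideal.mul_mem_mul hx hy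
    rw [hm2] at this
    exact Ideal.mem_bot.mp this
  -- elements outside m are units
  have hunit : ∀ x : R, x ∉ m → IsUnit x := by
    intro x hx
    rcases hdir x with h | h
    · exact absurd h hx
    · have h0 : (x - 1) * (x - 1) = 0 := hmul _ h _ h
      refine IsUnit.of_mul_eq_one (a := x) (2 - x) ?_
      linear_combination -h0
  constructor
  · rintro ⟨S, _, hSnt, hSnoeth, φ, hφ⟩
    by_cases h2 : (2 : R) = 0
    · left
      have hn : ((2 : ℕ) : R) = 0 := by push_cast; exact h2
      have hdvd : ringChar R ∣ 2 := ringChar.dvd hn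
      haveI : CharP R (ringChar R) := ringChar.charP R
      have hne1 : ringChar R ≠ 1 := CharP.char_ne_one R (ringChar R)
      rcases (Nat.prime_two.eq_one_or_self_of_dvd _ hdvd) with h | h
      · exact absurd h hne1
      · exact h
    · right
      letI := φ.toAlgebra
      haveI : Module.Flat S R := hφ
      haveI : IsNoetherian S S := hSnoeth
      have hφ2 : φ 2 = 2 := by
        have : ((2 : ℕ) : S) = (2 : S) := by norm_num
        rw [← this, map_natCast, Nat.cast_ofNat]
      set I : Ideal S := LinearMap.ker (LinearMap.lsmul S S 2) with hI
      -- the exact sequence I → S → S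
      have hex0 : Function.Exact (Submodule.subtype I) (LinearMap.lsmul S S 2) := by
        rw [LinearMap.exact_iff, Submodule.range_subtype]
      have hex : Function.Exact ((Submodule.subtype I).rTensor R)
          ((LinearMap.lsmul S S 2).rTensor R) := Module.Flat.rTensor_exact R hex0
      have hsmul : ∀ (s : S) (x : R), s • x = φ s * x := fun s x => rfl
      -- m ≤ Ideal.map φ I
      have hle : m ≤ Ideal.map φ I := by
        intro x hx
        have h2x : (2 : R) * x = 0 := hmul _ h2m _ hx
        have hker : (LinearMap.lsmul S S 2).rTensor R ((1 : S) ⊗ₜ[S] x) = 0 := by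
          have : (LinearMap.lsmul S S 2).rTensor R ((1 : S) ⊗ₜ[S] x) = (2 : S) ⊗ₜ[S] x := by
            simp [LinearMap.rTensor_tmul]
          rw [this]
          have := (TensorProduct.lid S R).injective (a₁ := (2 : S) ⊗ₜ[S] x) (a₂ := 0)
          apply this
          simp only [map_zero, TensorProduct.lid_tmul]
          rw [hsmul, hφ2, h2x]
        obtain ⟨z, hz⟩ := (hex _).mp hker
        have key : ∀ z : I ⊗[S] R,
            (TensorProduct.lid S R) ((Submodule.subtype I).rTensor R z) ∈ Ideal.map φ I := by
          intro z
          induction z using TensorProduct.induction_on with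
          | zero => simp
          | tmul a r =>
            simp only [LinearMap.rTensor_tmul, Submodule.coe_subtype, TensorProduct.lid_tmul]
            rw [hsmul]
            exact Ideal.mul_mem_right r _ (Ideal.mem_map_of_mem φ a.2)
          | add z₁ z₂ h₁ h₂ =>
            rw [map_add, map_add]
            exact Ideal.add_mem _ h₁ h₂
        have := key z
        rw [hz] at this
        simpa using this
      -- Ideal.map φ I ≤ m
      have hge : Ideal.map φ I ≤ m := by
        rw [Ideal.map_le_iff_le_comap]
        intro a ha
        have ha2 : (2 : S) * a = 0 := by
          have := ha
          rw [hI, LinearMap.mem_ker] at this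
          simpa [LinearMap.lsmul_apply, smul_eq_mul] using this
        have h2a : (2 : R) * φ a = 0 := by
          rw [← hφ2, ← map_mul, ha2, map_zero]
        show φ a ∈ m
        by_contra hmem
        have hu : IsUnit (φ a) := hunit _ hmem
        obtain ⟨u, hu'⟩ := hu
        apply h2
        have : (2 : R) * φ a * ↑u⁻¹ = 0 := by rw [h2a, zero_mul]
        rw [mul_assoc, ← hu', Units.mul_inv, mul_one] at this
        exact this
      have hmeq : m = Ideal.map φ I := le_antisymm hle hge
      -- m is finitely generated
      have hIfg : I.FG := IsNoetherian.noetherian I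
      have hmfg : m.FG := by rw [hmeq]; exact Ideal.FG.map hIfg φ
      obtain ⟨T, hT⟩ := hmfg
      have hTm : ∀ t ∈ T, t ∈ m := fun t ht => hT ▸ Submodule.subset_span ht
      -- every element of m is a sum of a subset of T, hence m is finite as a set
      have hsub : (m : Set R) ⊆ (fun s : Finset R => ∑ t ∈ s, t) '' (T.powerset : Set (Finset R)) := by
        intro x hx
        rw [← hT] at hx
        have key : ∀ y, y ∈ Submodule.span R (T : Set R) →
            y ∈ m ∧ ∃ s : Finset R, s ⊆ T ∧ ∑ t ∈ s, t = y := by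
          intro y hy
          induction hy using Submodule.span_induction with
          | mem t ht => exact ⟨hTm t ht, {t}, by simpa using ht, by simp⟩
          | zero => exact ⟨zero_mem m, ∅, by simp, by simp⟩
          | add y z hy hz ihy ihz =>
            obtain ⟨hym, s₁, hs₁, rfl⟩ := ihy
            obtain ⟨hzm, s₂, hs₂, rfl⟩ := ihz
            refine ⟨add_mem hym hzm, symmDiff s₁ s₂, ?_, ?_⟩
            · exact le_trans symmDiff_le_sup (sup_le hs₁ hs₂)
            · have hdisj : Disjoint (symmDiff s₁ s₂) (s₁ ∩ s₂) := by
                simpa [Finset.inf_eq_inter] using disjoint_symmDiff_inf s₁ s₂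
              have hcup : symmDiff s₁ s₂ ∪ (s₁ ∩ s₂) = s₁ ∪ s₂ := by
                simpa [Finset.sup_eq_union, Finset.inf_eq_inter] using symmDiff_sup_inf s₁ s₂
              have h1 : ∑ t ∈ s₁ ∪ s₂, t + ∑ t ∈ s₁ ∩ s₂, t = ∑ t ∈ s₁, t + ∑ t ∈ s₂, t :=
                Finset.sum_union_inter
              have h2' : ∑ t ∈ s₁ ∪ s₂, t
                  = ∑ t ∈ symmDiff s₁ s₂, t + ∑ t ∈ s₁ ∩ s₂, t := by
                rw [← hcup, Finset.sum_union hdisj]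
              have hzero : ∑ t ∈ s₁ ∩ s₂, t + ∑ t ∈ s₁ ∩ s₂, t = 0 := by
                rw [← Finset.sum_add_distrib]
                refine Finset.sum_eq_zero fun t ht => ?_
                have htm : t ∈ m := hTm t (hs₁ (Finset.mem_inter.mp ht).1)
                have h2t : (2 : R) * t = 0 := hmul _ h2m _ htm
                linear_combination h2t
              rw [h2'] at h1
              have h3 : ∑ t ∈ symmDiff s₁ s₂, t
                  + (∑ t ∈ s₁ ∩ s₂, t + ∑ t ∈ s₁ ∩ s₂, t)
                  = ∑ t ∈ s₁, t + ∑ t ∈ s₂, t := by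
                rw [← add_assoc]; exact h1
              rwa [hzero, add_zero] at h3
          | smul a y hy ihy =>
            obtain ⟨hym, s, hs, rfl⟩ := ihy
            refine ⟨Submodule.smul_mem m a hym, ?_⟩
            rcases hdir a with ham | ham
            · refine ⟨∅, by simp, ?_⟩
              have : a * (∑ t ∈ s, t) = 0 := hmul _ ham _ hym
              simpa [smul_eq_mul] using this.symm
            · refine ⟨s, hs, ?_⟩
              have h0 : (a - 1) * (∑ t ∈ s, t) = 0 := hmul _ ham _ hym
              have : a • (∑ t ∈ s, t) = ∑ t ∈ s, t := by
                rw [smul_eq_mul]; linear_combination h0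
              exact this.symm
        obtain ⟨_, s, hs, hsum⟩ := key x hx
        exact ⟨s, Finset.mem_coe.mpr (Finset.mem_powerset.mpr hs), hsum⟩
      have hmfinite : (m : Set R).Finite :=
        Set.Finite.subset (Set.Finite.image _ (T.powerset.finite_toSet)) hsub
      -- conclude: every ideal is finitely generated
      rw [isNoetherianRing_iff_ideal_fg]
      intro J
      by_cases hJ : J ≤ m
      · refine Submodule.fg_def.mpr ⟨J, hmfinite.subset hJ, Submodule.span_eq J⟩
      · obtain ⟨x, hxJ, hxm⟩ := SetLike.not_le_iff_exists.mp hJ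
        have : J = ⊤ := Ideal.eq_top_of_isUnit_mem J hxJ (hunit x hxm)
        rw [this]
        exact ⟨{1}, by simp⟩
  · rintro (hchar | hnoeth)
    · -- char R = 2 : take S = ULift (ZMod 2)
      haveI : CharP R 2 := hchar ▸ ringChar.charP R
      haveI := Fact.mk Nat.prime_two
      refine ⟨ULift.{u} (ZMod 2), inferInstance, inferInstance, ?_, ?_⟩
      · exact isNoetherianRing_iff.mpr inferInstance
      · set φ' : ULift.{u} (ZMod 2) →+* R :=
          (ZMod.castHom (dvd_refl 2) R).comp (ULift.ringEquiv.toRingHom) with hφ'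
        refine ⟨φ', ?_⟩
        letI := φ'.toAlgebra
        exact Module.Flat.of_free
    · exact ⟨R, inferInstance, inferInstance, hnoeth, RingHom.id R, RingHom.Flat.id R⟩
end
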